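/- arXiv:0911.0433 — 5 statements merged into one kernel-verified Lean document; each statement's English description precedes it below -/
import Mathlib

section
/- Let Y be an n×n complex matrix similar to a Jordan form via W (Y = W⁻¹ J W), with λ := max over eigenvalues λⱼ of Re(λⱼ). Then for every δ > 1, ‖e^{δY}‖ ≤ c·n·δ^{n−1}·e^{λδ}, where c = ‖W‖·‖W⁻¹‖ and ‖·‖ is the operator norm induced by the Euclidean norm. -/
open Matrix
open scoped Matrix.Norms.L2Operator

/-- `J` is a matrix in Jordan normal form: zero except on the diagonal and the
superdiagonal; superdiagonal entries are `0` or `1`, and a `1` can only connect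
equal diagonal entries (i.e. it lies within a single Jordan block). -/
def IsJordanForm {k : ℕ} (J : Matrix (Fin k) (Fin k) ℂ) : Prop :=
  (∀ i j : Fin k, (j : ℕ) ≠ (i : ℕ) → (j : ℕ) ≠ (i : ℕ) + 1 → J i j = 0) ∧
  (∀ i j : Fin k, (j : ℕ) = (i : ℕ) + 1 → J i j = 0 ∨ (J i j = 1 ∧ J i i = J j j))

/-- Operator norm (ℓ²) is at most `n` times the max entry norm. -/
lemma aux_opNorm_le_card_mul {n : ℕ} (A : Matrix (Fin n) (Fin n) ℂ) {M : ℝ} (hM : 0 ≤ M)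
    (h : ∀ i j, ‖A i j‖ ≤ M) : ‖A‖ ≤ n * M := by
  rw [Matrix.l2_opNorm_def]
  refine ContinuousLinearMap.opNorm_le_bound _ (by positivity) fun x => ?_
  have hx2 : ∑ j, ‖x j‖ ^ 2 = ‖x‖ ^ 2 := by
    rw [EuclideanSpace.norm_eq, Real.sq_sqrt (by positivity)]
  set S : ℝ := ∑ j, ‖x j‖ with hS
  have hS0 : 0 ≤ S := Finset.sum_nonneg fun _ _ => norm_nonneg _
  have hSsq : S ^ 2 ≤ n * ‖x‖ ^ 2 := by
    rw [← hx2]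
    have := sq_sum_le_card_mul_sum_sq (s := (Finset.univ : Finset (Fin n)))
      (f := fun j => ‖x j‖)
    simpa using this
  have hyi : ∀ i : Fin n, ‖(Matrix.toEuclideanLin A x) i‖ ≤ M * S := by
    intro i
    have : (Matrix.toEuclideanLin A x) i = ∑ j, A i j * x j := rfl
    rw [this]
    calc ‖∑ j, A i j * x j‖ ≤ ∑ j, ‖A i j * x j‖ := norm_sum_le _ _
      _ ≤ ∑ j, M * ‖x j‖ := by
          refine Finset.sum_le_sum fun j _ => ?_
          rw [norm_mul]
          exact mul_le_mul_of_nonneg_right (h i j) (norm_nonneg _)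
      _ = M * S := by rw [hS, Finset.mul_sum]
  have hnorm : ‖(Matrix.toEuclideanLin A x : EuclideanSpace ℂ (Fin n))‖ ^ 2
      ≤ (n * M * ‖x‖) ^ 2 := by
    rw [EuclideanSpace.norm_eq, Real.sq_sqrt (by positivity)]
    calc ∑ i, ‖(Matrix.toEuclideanLin A x) i‖ ^ 2
        ≤ ∑ _i : Fin n, (M * S) ^ 2 := by
          refine Finset.sum_le_sum fun i _ => ?_
          exact pow_le_pow_left₀ (norm_nonneg _) (hyi i) 2
      _ = n * (M * S) ^ 2 := by simp [mul_comm]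
      _ = M ^ 2 * (n * S ^ 2) := by ring
      _ ≤ M ^ 2 * (n * (n * ‖x‖ ^ 2)) := by
          refine mul_le_mul_of_nonneg_left (mul_le_mul_of_nonneg_left hSsq (by positivity)) (by positivity)
      _ = (n * M * ‖x‖) ^ 2 := by ring
  exact (pow_le_pow_iff_left₀ (norm_nonneg _) (by positivity) two_ne_zero).mp hnorm

lemma aux_diag_mem_spectrum {n : ℕ} (J : Matrix (Fin n) (Fin n) ℂ)
    (hJ : ∀ i j : Fin n, (j : ℕ) < (i : ℕ) → J i j = 0) (i : Fin n) :
    J i i ∈ spectrum ℂ J := by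
  rw [spectrum.mem_iff]
  intro h
  rw [Matrix.isUnit_iff_isUnit_det] at h
  have ht : (algebraMap ℂ (Matrix (Fin n) (Fin n) ℂ) (J i i) - J).BlockTriangular id := by
    intro a b hab
    simp only [Matrix.sub_apply, Matrix.algebraMap_matrix_apply]
    rw [if_neg (by exact fun hh => absurd (congrArg Fin.val hh) (Nat.ne_of_gt hab)),
      hJ a b hab, sub_zero]
  rw [Matrix.det_of_upperTriangular ht] at h
  have hz : ∏ k, (algebraMap ℂ (Matrix (Fin n) (Fin n) ℂ) (J i i) - J) k k = 0 := by
    apply Finset.prod_eq_zero (Finset.mem_univ i)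
    simp [Matrix.algebraMap_matrix_apply]
  rw [hz] at h
  exact h.ne_zero rfl

lemma aux_jordan_exp_entry {n : ℕ} (J : Matrix (Fin n) (Fin n) ℂ)
    (hJ : (∀ i j : Fin n, (j : ℕ) ≠ (i : ℕ) → (j : ℕ) ≠ (i : ℕ) + 1 → J i j = 0) ∧
      (∀ i j : Fin n, (j : ℕ) = (i : ℕ) + 1 → J i j = 0 ∨ (J i j = 1 ∧ J i i = J j j)))
    {δ : ℝ} (hδ : 1 ≤ δ) {lam : ℝ} (hlam : ∀ i, (J i i).re ≤ lam) (i j : Fin n) :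
    ‖NormedSpace.exp (δ • J) i j‖ ≤ δ ^ (n - 1) * Real.exp (lam * δ) := by
  have hδ0 : (0:ℝ) < δ := lt_of_lt_of_le one_pos hδ
  set D : Matrix (Fin n) (Fin n) ℂ := Matrix.diagonal (fun k => J k k) with hD
  set N : Matrix (Fin n) (Fin n) ℂ :=
    Matrix.of (fun a b => if (b : ℕ) = (a : ℕ) + 1 then J a b else 0) with hNdef
  have hNapp : ∀ a b : Fin n, N a b = if (b : ℕ) = (a : ℕ) + 1 then J a b else 0 :=
    fun a b => rfl
  have hN0 : ∀ a b : Fin n, (b : ℕ) ≠ (a : ℕ) + 1 → N a b = 0 := by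
    intro a b h; rw [hNapp, if_neg h]
  have hN1 : ∀ a b : Fin n, ‖N a b‖ ≤ 1 := by
    intro a b
    rw [hNapp]
    split
    · rcases hJ.2 a b ‹_› with h | h
      · rw [h]; simp
      · rw [h.1]; simp
    · simp
  -- splitting
  have hJDN : J = D + N := by
    ext a b
    by_cases h1 : (b : ℕ) = (a : ℕ)
    · have hab : b = a := Fin.ext h1
      subst hab
      rw [Matrix.add_apply, hNapp, if_neg (by omega), hD, Matrix.diagonal_apply_eq, add_zero]
    · by_cases h2 : (b : ℕ) = (a : ℕ) + 1
      · rw [Matrix.add_apply, hNapp, if_pos h2, hD,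
          Matrix.diagonal_apply_ne _ (fun hab => h1 (by rw [hab])), zero_add]
      · rw [hJ.1 a b h1 h2, Matrix.add_apply, hNapp, if_neg h2, hD,
          Matrix.diagonal_apply_ne _ (fun hab => h1 (by rw [hab])), add_zero]
  -- commutation
  have hcommDN : Commute D N := by
    show D * N = N * D
    ext a b
    rw [hD, Matrix.diagonal_mul, Matrix.mul_diagonal]
    by_cases h2 : (b : ℕ) = (a : ℕ) + 1
    · rcases hJ.2 a b h2 with h | h
      · rw [hNapp, if_pos h2, h, mul_zero, zero_mul]
      · rw [h.2, mul_comm]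
    · rw [hN0 a b h2, mul_zero, zero_mul]
  -- powers of N
  have key0 : ∀ (k : ℕ) (a b : Fin n), (b : ℕ) ≠ (a : ℕ) + k → (N ^ k) a b = 0 := by
    intro k
    induction k with
    | zero =>
      intro a b h
      rw [pow_zero, Matrix.one_apply_ne (fun hab => h (by rw [hab]; simp))]
    | succ k ih =>
      intro a b h
      rw [pow_succ, Matrix.mul_apply]
      apply Finset.sum_eq_zero
      intro l _
      by_cases hl : (l : ℕ) = (a : ℕ) + k
      · rw [hN0 l b (by omega), mul_zero]
      · rw [ih a l hl, zero_mul]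
  have key1 : ∀ (k : ℕ) (a b : Fin n), ‖(N ^ k) a b‖ ≤ 1 := by
    intro k
    induction k with
    | zero =>
      intro a b
      rw [pow_zero, Matrix.one_apply]
      split <;> simp
    | succ k ih =>
      intro a b
      by_cases h : (b : ℕ) = (a : ℕ) + (k + 1)
      · have hlt : (a : ℕ) + k < n := by have := b.isLt; omega
        rw [pow_succ, Matrix.mul_apply, Finset.sum_eq_single (⟨(a : ℕ) + k, hlt⟩ : Fin n)]
        · calc ‖(N ^ k) a ⟨(a : ℕ) + k, hlt⟩ * N ⟨(a : ℕ) + k, hlt⟩ b‖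
              = ‖(N ^ k) a ⟨(a : ℕ) + k, hlt⟩‖ * ‖N ⟨(a : ℕ) + k, hlt⟩ b‖ := norm_mul _ _
            _ ≤ 1 * 1 := mul_le_mul (ih a _) (hN1 _ _) (norm_nonneg _) zero_le_one
            _ = 1 := one_mul 1
        · intro l _ hne
          by_cases hl : (l : ℕ) = (a : ℕ) + k
          · exact absurd (Fin.ext hl) hne
          · rw [key0 k a l hl, zero_mul]
        · intro habs
          exact absurd (Finset.mem_univ _) habs
      · rw [key0 (k + 1) a b h, norm_zero]
        exact zero_le_one
  -- exp of δ • N as a finite sum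
  have hexpN : NormedSpace.exp (δ • N)
      = ∑ k ∈ Finset.range n, (Nat.factorial k : ℂ)⁻¹ • (δ • N) ^ k := by
    simp only [NormedSpace.exp_eq_tsum ℂ]
    apply tsum_eq_sum
    intro k hk
    have hkn : n ≤ k := le_of_not_gt (fun hlt => hk (Finset.mem_range.mpr hlt))
    have hNk : N ^ k = 0 := by
      apply pow_eq_zero_of_le hkn
      ext a b
      rw [key0 n a b (Nat.ne_of_lt (lt_of_lt_of_le b.isLt (Nat.le_add_left n a)))]
      rfl
    rw [smul_pow, hNk, smul_zero, smul_zero]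
  -- entrywise bound on exp (δ • N)
  have hE : ∀ a b : Fin n, ‖NormedSpace.exp (δ • N) a b‖ ≤ δ ^ (n - 1) := by
    intro a b
    have hEab : NormedSpace.exp (δ • N) a b
        = ∑ k ∈ Finset.range n, (Nat.factorial k : ℂ)⁻¹ * (δ ^ k • (N ^ k) a b) := by
      rw [hexpN]
      rw [Matrix.sum_apply]
      refine Finset.sum_congr rfl fun k _ => ?_
      rw [smul_pow, Matrix.smul_apply, Matrix.smul_apply, smul_eq_mul]
    rw [hEab, Finset.sum_eq_single ((b : ℕ) - (a : ℕ))]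
    · have hba : (b : ℕ) - (a : ℕ) ≤ n - 1 := by have := b.isLt; omega
      calc ‖((Nat.factorial ((b : ℕ) - (a : ℕ)) : ℂ))⁻¹ * (δ ^ ((b : ℕ) - (a : ℕ)) • (N ^ ((b : ℕ) - (a : ℕ))) a b)‖
          = ‖((Nat.factorial ((b : ℕ) - (a : ℕ)) : ℂ))⁻¹‖ * ‖δ ^ ((b : ℕ) - (a : ℕ)) • (N ^ ((b : ℕ) - (a : ℕ))) a b‖ :=
            norm_mul _ _
        _ ≤ 1 * (δ ^ (n - 1) * 1) := by
            refine mul_le_mul ?_ ?_ (norm_nonneg _) zero_le_one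
            · rw [norm_inv, Complex.norm_natCast]
              exact inv_le_one_of_one_le₀ (Nat.one_le_cast.mpr (Nat.factorial_pos _))
            · rw [norm_smul, Real.norm_eq_abs, abs_pow, abs_of_pos hδ0]
              refine mul_le_mul ?_ (key1 _ _ _) (norm_nonneg _) (by positivity)
              exact pow_le_pow_right₀ hδ hba
        _ = δ ^ (n - 1) := by ring
    · intro k _ hk
      rw [key0 k a b (by omega), smul_zero, mul_zero]
    · intro hmem
      exact absurd (Finset.mem_range.mpr (by have := b.isLt; omega)) hmem
  -- exp (δ • J) = diagonal * exp (δ • N)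
  have hsplit : δ • J = δ • D + δ • N := by rw [hJDN, smul_add]
  have hcomm : Commute (δ • D) (δ • N) := (hcommDN.smul_left δ).smul_right δ
  have hexpJ : NormedSpace.exp (δ • J)
      = NormedSpace.exp (δ • D) * NormedSpace.exp (δ • N) := by
    rw [hsplit]
    exact Matrix.exp_add_of_commute (δ • D) (δ • N) hcomm
  have hDdiag : δ • D = Matrix.diagonal (fun k => δ • J k k) := by
    ext a b
    by_cases hab : a = b
    · subst hab; simp [hD]
    · simp [hD, Matrix.diagonal_apply_ne _ hab]
  have hexpD : NormedSpace.exp (δ • D)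
      = Matrix.diagonal (fun k => NormedSpace.exp (δ • J k k)) := by
    rw [hDdiag, Matrix.exp_diagonal, Pi.exp_def]
  have hEntry : NormedSpace.exp (δ • J) i j
      = NormedSpace.exp (δ • J i i) * NormedSpace.exp (δ • N) i j := by
    rw [hexpJ, hexpD, Matrix.diagonal_mul]
  rw [hEntry, norm_mul]
  have hnormD : ‖NormedSpace.exp (δ • J i i)‖ ≤ Real.exp (lam * δ) := by
    rw [← Complex.exp_eq_exp_ℂ, Complex.norm_exp]
    apply Real.exp_le_exp.mpr
    have : (δ • J i i).re = δ * (J i i).re := by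
      simp [Complex.real_smul]
    rw [this]
    calc δ * (J i i).re ≤ δ * lam := mul_le_mul_of_nonneg_left (hlam i) hδ0.le
      _ = lam * δ := mul_comm _ _
  calc ‖NormedSpace.exp (δ • J i i)‖ * ‖NormedSpace.exp (δ • N) i j‖
      ≤ Real.exp (lam * δ) * δ ^ (n - 1) :=
        mul_le_mul hnormD (hE i j) (norm_nonneg _) (Real.exp_pos _).le
    _ = δ ^ (n - 1) * Real.exp (lam * δ) := mul_comm _ _

/-- **Bound from Floquet exponents.** If `Y = W⁻¹ J W` with `J` in Jordan form and
`λ` is the maximal real part of the eigenvalues of `Y`, then for every `δ > 1`,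
`‖e^{δY}‖ ≤ c n δ^{n−1} e^{λδ}` with `c = ‖W‖ ‖W⁻¹‖` (operator norms induced by
the Euclidean norm). -/
theorem exp_norm_bound_of_jordan (n : ℕ) (Y W J : Matrix (Fin n) (Fin n) ℂ)
    (hW : IsUnit W) (hJ : IsJordanForm J) (hconj : Y = W⁻¹ * J * W)
    (lam : ℝ) (hlam : IsGreatest {r : ℝ | ∃ μ ∈ spectrum ℂ Y, r = μ.re} lam)
    (c : ℝ) (hc : c = ‖W‖ * ‖W⁻¹‖) :
    ∀ δ : ℝ, 1 < δ →
      ‖NormedSpace.exp (δ • Y)‖ ≤ c * n * δ ^ (n - 1) * Real.exp (lam * δ) := by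
  intro δ hδ
  have hδ0 : (0:ℝ) < δ := lt_trans one_pos hδ
  obtain ⟨u, hu⟩ := hW
  -- diagonal entries of J are eigenvalues of Y
  have hspec : ∀ i : Fin n, (J i i).re ≤ lam := by
    intro i
    apply hlam.2
    refine ⟨J i i, ?_, rfl⟩
    rw [hconj, ← hu, ← Matrix.coe_units_inv, spectrum.units_conjugate']
    exact aux_diag_mem_spectrum J (fun a b hab => hJ.1 a b (by omega) (by omega)) i
  -- conjugate the exponential
  have hYconj : δ • Y = W⁻¹ * (δ • J) * W := by
    rw [hconj, Matrix.mul_smul, Matrix.smul_mul]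
  have hexp : NormedSpace.exp (δ • Y) = W⁻¹ * NormedSpace.exp (δ • J) * W := by
    rw [hYconj]
    exact Matrix.exp_conj' W (δ • J) ⟨u, hu⟩
  -- entrywise bound on exp (δ • J)
  have hentry := aux_jordan_exp_entry J hJ hδ.le hspec
  have hnorm : ‖NormedSpace.exp (δ • J)‖ ≤ n * (δ ^ (n - 1) * Real.exp (lam * δ)) :=
    aux_opNorm_le_card_mul _ (by positivity) hentry
  calc ‖NormedSpace.exp (δ • Y)‖
      = ‖W⁻¹ * NormedSpace.exp (δ • J) * W‖ := by rw [hexp]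
    _ ≤ ‖W⁻¹ * NormedSpace.exp (δ • J)‖ * ‖W‖ := norm_mul_le _ _
    _ ≤ ‖W⁻¹‖ * ‖NormedSpace.exp (δ • J)‖ * ‖W‖ :=
        mul_le_mul_of_nonneg_right (norm_mul_le _ _) (norm_nonneg _)
    _ ≤ ‖W⁻¹‖ * (n * (δ ^ (n - 1) * Real.exp (lam * δ))) * ‖W‖ := by
        refine mul_le_mul_of_nonneg_right
          (mul_le_mul_of_nonneg_left hnorm (norm_nonneg _)) (norm_nonneg _)
    _ = c * n * δ ^ (n - 1) * Real.exp (lam * δ) := by rw [hc]; ring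
end

section
/- Suppose B and g are continuous and τ-periodic, and the Floquet exponents of the system ẋ = B(t)x all have negative real part (λ := max real part < 0). Then the solution x of ẋ = B(t)x + g(t), x(t₀) = x₀, satisfies ‖x(t+τ) − x(t)‖ ≤ e^{λ(t−t₀)}·m·c·n·(t−t₀+τ)^{n−1}·(2‖x₀‖ + τ·max_{v∈[0,τ]}‖g(v)‖) for t−t₀ > 1, where m = max_{(t,t')∈[0,τ]²}‖X(t,t')‖ and c is the conditioning constant of the Jordan transformation. In particular ‖x(t+τ) − x(t)‖ → 0 exponentially as t → ∞. -/
open Matrix Set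
open scoped Matrix.Norms.L2Operator

/-- The Euclidean (`ℓ²`) norm of a complex vector. -/
noncomputable def eunorm {n : ℕ} (v : Fin n → ℂ) : ℝ :=
  ‖(EuclideanSpace.equiv (Fin n) ℂ).symm v‖

namespace APaux
variable {n : ℕ}

noncomputable def tE (v : Fin n → ℂ) : EuclideanSpace ℂ (Fin n) :=
  (EuclideanSpace.equiv (Fin n) ℂ).symm v

lemma eunorm_eq (v : Fin n → ℂ) : eunorm v = ‖tE v‖ := rfl

lemma tE_sub (v w : Fin n → ℂ) : tE (v - w) = tE v - tE w := rfl
lemma tE_add (v w : Fin n → ℂ) : tE (v + w) = tE v + tE w := rfl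

lemma tE_mulVec_norm (A : Matrix (Fin n) (Fin n) ℂ) (v : Fin n → ℂ) :
    ‖tE (A *ᵥ v)‖ ≤ ‖A‖ * ‖tE v‖ :=
  Matrix.l2_opNorm_mulVec A (tE v)

noncomputable def tECLM : (Fin n → ℂ) →L[ℝ] EuclideanSpace ℂ (Fin n) :=
  ((EuclideanSpace.equiv (Fin n) ℂ).symm.toContinuousLinearMap.restrictScalars ℝ)

noncomputable def tEinvCLM : EuclideanSpace ℂ (Fin n) →L[ℝ] (Fin n → ℂ) :=
  ((EuclideanSpace.equiv (Fin n) ℂ).toContinuousLinearMap.restrictScalars ℝ)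

lemma hasDerivAt_tE {f : ℝ → Fin n → ℂ} {f' : Fin n → ℂ} {t : ℝ}
    (h : ∀ i, HasDerivAt (fun s => f s i) (f' i) t) :
    HasDerivAt (fun s => tE (f s)) (tE f') t := by
  have h2 : HasDerivAt f f' t := hasDerivAt_pi.2 h
  exact (tECLM.hasFDerivAt.comp_hasDerivAt t h2)

lemma hasDerivAt_of_tE {f : ℝ → Fin n → ℂ} {f' : Fin n → ℂ} {t : ℝ}
    (h : HasDerivAt (fun s => tE (f s)) (tE f') t) (i : Fin n) :
    HasDerivAt (fun s => f s i) (f' i) t := by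
  have h2 : HasDerivAt f f' t := tEinvCLM.hasFDerivAt.comp_hasDerivAt t h
  exact hasDerivAt_pi.1 h2 i

lemma sum_abs_le_sqrt (x : EuclideanSpace ℂ (Fin n)) :
    ∑ j, ‖x j‖ ≤ Real.sqrt n * ‖x‖ := by
  have cs := Finset.sum_mul_sq_le_sq_mul_sq Finset.univ (fun _ : Fin n => (1:ℝ))
    (fun j => ‖x j‖)
  simp only [one_mul, one_pow, Finset.sum_const, Finset.card_univ, Fintype.card_fin,
    nsmul_eq_mul, mul_one] at cs
  have hx : ‖x‖ ^ 2 = ∑ j, ‖x j‖ ^ 2 := by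
    rw [EuclideanSpace.norm_eq, Real.sq_sqrt (by positivity)]
  have h1 : (0:ℝ) ≤ ∑ j, ‖x j‖ := Finset.sum_nonneg fun j _ => norm_nonneg _
  have h2 : (0:ℝ) ≤ Real.sqrt n * ‖x‖ := by positivity
  nlinarith [Real.sq_sqrt (Nat.cast_nonneg (α := ℝ) n), Real.sqrt_nonneg (n:ℝ)]

/-- operator norm bound from entrywise bound -/
lemma opNorm_le_of_entries (A : Matrix (Fin n) (Fin n) ℂ) {M : ℝ} (hM : 0 ≤ M)
    (h : ∀ i j, ‖A i j‖ ≤ M) : ‖A‖ ≤ n * M := by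
  rw [Matrix.l2_opNorm_def]
  apply ContinuousLinearMap.opNorm_le_bound _ (by positivity)
  intro x
  have key : ∀ i : Fin n, ‖(A *ᵥ (x : Fin n → ℂ)) i‖ ≤ M * (Real.sqrt n * ‖x‖) := by
    intro i
    calc ‖∑ j, A i j * x j‖ ≤ ∑ j, ‖A i j * x j‖ := norm_sum_le _ _
      _ ≤ ∑ j, M * ‖x j‖ := by
          refine Finset.sum_le_sum fun j _ => ?_
          rw [norm_mul]
          exact mul_le_mul_of_nonneg_right (h i j) (norm_nonneg _) |>.trans
            (le_refl _)
      _ = M * ∑ j, ‖x j‖ := by rw [Finset.mul_sum]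
      _ ≤ M * (Real.sqrt n * ‖x‖) :=
          mul_le_mul_of_nonneg_left (sum_abs_le_sqrt x) hM
  calc ‖(Matrix.toEuclideanLin ≪≫ₗ LinearMap.toContinuousLinearMap) A x‖
      = ‖tE (A *ᵥ (x : Fin n → ℂ))‖ := rfl
    _ ≤ Real.sqrt (∑ _i : Fin n, (M * (Real.sqrt n * ‖x‖))^2) := by
        rw [EuclideanSpace.norm_eq]
        apply Real.sqrt_le_sqrt
        refine Finset.sum_le_sum fun i _ => ?_
        have hk := key i
        have h0 : (0:ℝ) ≤ ‖(A *ᵥ (x : Fin n → ℂ)) i‖ := norm_nonneg _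
        calc ‖tE (A *ᵥ (x : Fin n → ℂ)) i‖ ^ 2
            = ‖(A *ᵥ (x : Fin n → ℂ)) i‖ ^ 2 := rfl
          _ ≤ (M * (Real.sqrt n * ‖x‖))^2 := by nlinarith
    _ ≤ n * M * ‖x‖ := by
        rw [Finset.sum_const, Finset.card_univ, Fintype.card_fin, nsmul_eq_mul]
        rw [show (n:ℝ) * (M * (Real.sqrt n * ‖x‖))^2
            = ((n:ℝ) * M * ‖x‖)^2 by
          have hs : Real.sqrt n ^ 2 = (n:ℝ) := Real.sq_sqrt (Nat.cast_nonneg n)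
          rw [mul_pow, mul_pow, hs]; ring]
        rw [Real.sqrt_sq (by positivity)]


/-- Uniqueness for the linear ODE `f' = B f + g`. -/
lemma ode_unique (B : ℝ → Matrix (Fin n) (Fin n) ℂ) (hBc : Continuous B)
    (g : ℝ → Fin n → ℂ)
    (f₁ f₂ : ℝ → Fin n → ℂ)
    (h₁ : ∀ t i, HasDerivAt (fun s => f₁ s i) ((B t *ᵥ f₁ t) i + g t i) t)
    (h₂ : ∀ t i, HasDerivAt (fun s => f₂ s i) ((B t *ᵥ f₂ t) i + g t i) t)
    (t₀ : ℝ) (h0 : f₁ t₀ = f₂ t₀) : ∀ t, f₁ t = f₂ t := by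
  intro t₁
  set a : ℝ := min t₀ t₁ - 1 with ha
  set b : ℝ := max t₀ t₁ + 1 with hb
  have hab : a < b := by
    have h1 : min t₀ t₁ ≤ max t₀ t₁ := le_trans (min_le_left _ _) (le_max_left _ _)
    simp only [ha, hb]; linarith
  have ht₀ : t₀ ∈ Icc a b := by
    constructor
    · have := min_le_left t₀ t₁; simp only [ha]; linarith
    · have := le_max_left t₀ t₁; simp only [hb]; linarith
  have ht₁ : t₁ ∈ Icc a b := by
    constructor
    · have := min_le_right t₀ t₁; simp only [ha]; linarith
    · have := le_max_right t₀ t₁; simp only [hb]; linarith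
  -- clamp
  set cl : ℝ → ℝ := fun s => max a (min b s) with hcl
  have hclmem : ∀ s, cl s ∈ Icc a b := by
    intro s
    refine ⟨le_max_left _ _, max_le hab.le (min_le_left _ _)⟩
  have hclid : ∀ s ∈ Icc a b, cl s = s := by
    intro s hs
    simp only [hcl]
    rw [min_eq_right hs.2, max_eq_right hs.1]
  -- Lipschitz bound
  obtain ⟨C, hC⟩ := (isCompact_Icc (a := a) (b := b)).exists_bound_of_continuousOn
    hBc.continuousOn
  set K : NNReal := Real.toNNReal C with hK
  set v : ℝ → EuclideanSpace ℂ (Fin n) → EuclideanSpace ℂ (Fin n) :=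
    fun s y => tE (B (cl s) *ᵥ ((EuclideanSpace.equiv (Fin n) ℂ) y) + g (cl s)) with hv
  have hlip : ∀ s, LipschitzWith K (v s) := by
    intro s
    apply LipschitzWith.of_dist_le_mul
    intro y₁ y₂
    have hsub : v s y₁ - v s y₂
        = tE (B (cl s) *ᵥ ((EuclideanSpace.equiv (Fin n) ℂ) (y₁ - y₂))) := by
      simp only [hv, tE]
      ext i
      simp [Matrix.mulVec_sub, Pi.sub_apply]
    rw [dist_eq_norm, dist_eq_norm, hsub]
    calc ‖tE (B (cl s) *ᵥ ((EuclideanSpace.equiv (Fin n) ℂ) (y₁ - y₂)))‖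
        ≤ ‖B (cl s)‖ * ‖tE ((EuclideanSpace.equiv (Fin n) ℂ) (y₁ - y₂))‖ :=
          tE_mulVec_norm _ _
      _ ≤ (K : ℝ) * ‖y₁ - y₂‖ := by
          apply mul_le_mul_of_nonneg_right _ (norm_nonneg _)
          exact le_trans (hC (cl s) (hclmem s)) (Real.le_coe_toNNReal C)
  -- the two solutions in EuclideanSpace
  have hder : ∀ (f : ℝ → Fin n → ℂ),
      (∀ t i, HasDerivAt (fun s => f s i) ((B t *ᵥ f t) i + g t i) t) →
      ∀ s ∈ Icc a b, HasDerivAt (fun u => tE (f u)) (v s (tE (f s))) s := by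
    intro f hf s hs
    have : v s (tE (f s)) = tE (fun i => (B s *ᵥ f s) i + g s i) := by
      simp only [hv, hclid s hs]
      rfl
    rw [this]
    exact hasDerivAt_tE (hf s)
  have hcont : ∀ (f : ℝ → Fin n → ℂ),
      (∀ t i, HasDerivAt (fun s => f s i) ((B t *ᵥ f t) i + g t i) t) →
      Continuous (fun u => tE (f u)) := by
    intro f hf
    rw [continuous_iff_continuousAt]
    intro s
    exact (hasDerivAt_tE (hf s)).continuousAt
  have ht₀o : t₀ ∈ Ioo a b := by
    constructor
    · have := min_le_left t₀ t₁; simp only [ha]; linarith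
    · have := le_max_left t₀ t₁; simp only [hb]; linarith
  have key := ODE_solution_unique_of_mem_Icc (E := EuclideanSpace ℂ (Fin n)) (v := v)
    (s := fun _ => Set.univ)
    (f := fun u => tE (f₁ u)) (g := fun u => tE (f₂ u)) (K := K)
    (fun s _ => LipschitzWith.lipschitzOnWith (hlip s)) ht₀o
    ((hcont f₁ h₁).continuousOn)
    (fun s hs => hder f₁ h₁ s (Ioo_subset_Icc_self hs))
    (fun _ _ => trivial)
    ((hcont f₂ h₂).continuousOn)
    (fun s hs => hder f₂ h₂ s (Ioo_subset_Icc_self hs))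
    (fun _ _ => trivial)
    (by simp only [h0])
  have := key ht₁
  exact (EuclideanSpace.equiv (Fin n) ℂ).symm.injective this


section Propagator
variable (B : ℝ → Matrix (Fin n) (Fin n) ℂ) (hBc : Continuous B)
  (P : ℝ → ℝ → Matrix (Fin n) (Fin n) ℂ)
  (hPinit : ∀ t₀, P t₀ t₀ = 1)
  (hPode : ∀ t t₀ i j, HasDerivAt (fun s => P s t₀ i j) ((B t * P t t₀) i j) t)

include hPode in
/-- Columns of the propagator solve the homogeneous equation. -/
lemma mulVec_hasDerivAt (a : ℝ) (w : Fin n → ℂ) (t : ℝ) (i : Fin n) :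
    HasDerivAt (fun s => (P s a *ᵥ w) i) ((B t *ᵥ (P t a *ᵥ w)) i + (0 : Fin n → ℂ) i) t := by
  have hsum : HasDerivAt (fun s => ∑ k, P s a i k * w k)
      (∑ k, (B t * P t a) i k * w k) t := by
    apply HasDerivAt.fun_sum
    intro k _
    exact (hPode t a i k).mul_const (w k)
  have h1 : (fun s => (P s a *ᵥ w) i) = fun s => ∑ k, P s a i k * w k := by
    funext s; simp [Matrix.mulVec, dotProduct]
  have h2 : (B t *ᵥ (P t a *ᵥ w)) i + (0 : Fin n → ℂ) i = ∑ k, (B t * P t a) i k * w k := by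
    rw [Matrix.mulVec_mulVec]
    simp [Matrix.mulVec, dotProduct]
  rw [h1, h2]
  exact hsum

include hBc hPinit hPode in
lemma P_cocycle_vec (a b : ℝ) (w : Fin n → ℂ) (s : ℝ) :
    P s a *ᵥ w = P s b *ᵥ (P b a *ᵥ w) := by
  have := ode_unique B hBc 0 (fun s => P s a *ᵥ w) (fun s => P s b *ᵥ (P b a *ᵥ w))
    (fun t i => mulVec_hasDerivAt B P hPode a w t i)
    (fun t i => mulVec_hasDerivAt B P hPode b (P b a *ᵥ w) t i)
    b (by show P b a *ᵥ w = P b b *ᵥ (P b a *ᵥ w); rw [hPinit b, Matrix.one_mulVec])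
  exact this s

lemma mulVec_single_eq (A : Matrix (Fin n) (Fin n) ℂ) (j : Fin n) :
    A *ᵥ Pi.single j 1 = fun i => A i j := by
  funext i
  simp [Matrix.mulVec, dotProduct, Pi.single_apply, Finset.sum_ite_eq',
    mul_comm]

include hBc hPinit hPode in
lemma P_cocycle (a b s : ℝ) : P s a = P s b * P b a := by
  ext i j
  have := P_cocycle_vec B hBc P hPinit hPode a b (Pi.single j 1) s
  rw [Matrix.mulVec_mulVec] at this
  have h1 := congrFun (mulVec_single_eq (P s a) j) i
  have h2 := congrFun (mulVec_single_eq (P s b * P b a) j) i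
  rw [← h1, ← h2, this]

include hBc hPinit hPode in
lemma P_mul_inv (a b : ℝ) : P a b * P b a = 1 := by
  rw [← P_cocycle B hBc P hPinit hPode a b a, hPinit]

include hBc hPinit hPode in
lemma P_isUnit (a b : ℝ) : IsUnit (P b a) :=
  ⟨⟨P b a, P a b, P_mul_inv B hBc P hPinit hPode b a, P_mul_inv B hBc P hPinit hPode a b⟩, rfl⟩

include hBc hPinit hPode in
lemma P_inv_eq (a b : ℝ) : (P b a)⁻¹ = P a b :=
  Matrix.inv_eq_left_inv (P_mul_inv B hBc P hPinit hPode a b)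

include hPode in
/-- Continuity of `s ↦ P s a` (entrywise ⇒ matrix). -/
lemma P_cont_fst (a : ℝ) : Continuous fun s => P s a := by
  apply continuous_matrix
  intro i j
  rw [continuous_iff_continuousAt]
  exact fun t => (hPode t a i j).continuousAt

include hBc hPinit hPode in
lemma P_cont_snd (a : ℝ) : Continuous fun u => P a u := by
  have heq : (fun u => P a u) = fun u => (Ring.inverse (P u a).det) • (P u a).adjugate := by
    funext u
    rw [← Matrix.inv_def, P_inv_eq B hBc P hPinit hPode a u]
  rw [heq]
  have hdet : ∀ u, (P u a).det ≠ 0 := by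
    intro u
    have hu := (P_isUnit B hBc P hPinit hPode a u)
    exact ((Matrix.isUnit_iff_isUnit_det _).mp hu).ne_zero
  have hcd : Continuous fun u => (P u a).det := (P_cont_fst B P hPode a).matrix_det
  have hinv : Continuous fun u => Ring.inverse ((P u a).det) := by
    simp only [Ring.inverse_eq_inv']
    exact hcd.inv₀ hdet
  exact hinv.smul (P_cont_fst B P hPode a).matrix_adjugate

include hBc hPinit hPode in
lemma P_periodic (τ : ℝ) (hBper : ∀ t, B (t + τ) = B t) (a s : ℝ) :
    P (s + τ) (a + τ) = P s a := by
  have key : ∀ w : Fin n → ℂ, ∀ s, P (s + τ) (a + τ) *ᵥ w = P s a *ᵥ w := by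
    intro w
    apply ode_unique B hBc 0 (fun s => P (s + τ) (a + τ) *ᵥ w) (fun s => P s a *ᵥ w)
    · intro t i
      have houter := mulVec_hasDerivAt B P hPode (a + τ) w (t + τ) i
      have hcomp := houter.comp_add_const t τ
      rw [hBper t] at hcomp
      exact hcomp
    · intro t i
      exact mulVec_hasDerivAt B P hPode a w t i
    · show P (a + τ) (a + τ) *ᵥ w = P a a *ᵥ w
      rw [hPinit, hPinit]
  ext i j
  have := key (Pi.single j 1) s
  rw [mulVec_single_eq, mulVec_single_eq] at this
  exact congrFun this i

section VarConst
variable (g : ℝ → Fin n → ℂ) (hgc : Continuous g)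
  (t₀ : ℝ) (x₀ : Fin n → ℂ) (x : ℝ → Fin n → ℂ) (hxinit : x t₀ = x₀)
  (hxode : ∀ t i, HasDerivAt (fun s => x s i) ((B t).mulVec (x t) i + g t i) t)

include hBc hPinit hPode hgc in
lemma integrand_cont (a : ℝ) : Continuous fun v => tE (P a v *ᵥ g v) := by
  have h1 : Continuous fun v => P a v *ᵥ g v :=
    (P_cont_snd B hBc P hPinit hPode a).matrix_mulVec hgc
  exact ((EuclideanSpace.equiv (Fin n) ℂ).symm.continuous).comp h1

include hBc hPinit hPode hgc hxinit hxode in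
lemma var_const : ∀ t, tE (x t) =
    tE (P t t₀ *ᵥ x₀) + ∫ v in t₀..t, tE (P t v *ᵥ g v) := by
  -- the integrand with frozen first argument
  set G : ℝ → EuclideanSpace ℂ (Fin n) := fun v => tE (P t₀ v *ᵥ g v) with hG
  have hGc : Continuous G := integrand_cont B hBc P hPinit hPode g hgc t₀
  set F : ℝ → EuclideanSpace ℂ (Fin n) := fun t => ∫ v in t₀..t, G v with hF
  have hFderiv : ∀ t, HasDerivAt F (G t) t := by
    intro t
    exact intervalIntegral.integral_hasDerivAt_right
      (hGc.intervalIntegrable _ _)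
      (hGc.stronglyMeasurableAtFilter _ _)
      hGc.continuousAt
  set y : ℝ → Fin n → ℂ := fun t => P t t₀ *ᵥ (x₀ + (EuclideanSpace.equiv (Fin n) ℂ) (F t))
    with hy
  have hFcomp : ∀ t k, HasDerivAt (fun s => (EuclideanSpace.equiv (Fin n) ℂ) (F s) k)
      ((P t₀ t *ᵥ g t) k) t := by
    intro t k
    have h2 : HasDerivAt (fun s => (EuclideanSpace.equiv (Fin n) ℂ) (F s))
        ((EuclideanSpace.equiv (Fin n) ℂ) (G t)) t :=
      (((EuclideanSpace.equiv (Fin n) ℂ).toContinuousLinearMap.restrictScalars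
        ℝ).hasFDerivAt.comp_hasDerivAt t (hFderiv t))
    exact hasDerivAt_pi.1 h2 k
  have hyode : ∀ t i, HasDerivAt (fun s => y s i) ((B t).mulVec (y t) i + g t i) t := by
    intro t i
    have hterm : ∀ k : Fin n, HasDerivAt
        (fun s => P s t₀ i k * (x₀ + (EuclideanSpace.equiv (Fin n) ℂ) (F s)) k)
        ((B t * P t t₀) i k * (x₀ + (EuclideanSpace.equiv (Fin n) ℂ) (F t)) k
          + P t t₀ i k * (P t₀ t *ᵥ g t) k) t := by
      intro k
      have hp := hPode t t₀ i k
      have hq : HasDerivAt (fun s => (x₀ + (EuclideanSpace.equiv (Fin n) ℂ) (F s)) k)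
          ((P t₀ t *ᵥ g t) k) t := by
        simpa using (hFcomp t k).const_add (x₀ k)
      exact hp.mul hq
    have hsum := HasDerivAt.fun_sum (fun k (_ : k ∈ Finset.univ) => hterm k)
    have hfun : (fun s => y s i)
        = fun s => ∑ k, P s t₀ i k * (x₀ + (EuclideanSpace.equiv (Fin n) ℂ) (F s)) k := by
      funext s; simp [hy, Matrix.mulVec, dotProduct]
    rw [hfun]
    refine hsum.congr_deriv ?_
    symm
    rw [Finset.sum_add_distrib]
    congr 1
    · show (B t *ᵥ (P t t₀ *ᵥ (x₀ + (EuclideanSpace.equiv (Fin n) ℂ) (F t)))) i = _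
      rw [Matrix.mulVec_mulVec]
      simp [Matrix.mulVec, dotProduct]
    · have : ∑ k, P t t₀ i k * (P t₀ t *ᵥ g t) k = (P t t₀ *ᵥ (P t₀ t *ᵥ g t)) i := by
        simp [Matrix.mulVec, dotProduct]
      rw [this, ← P_cocycle_vec B hBc P hPinit hPode t t₀ (g t) t, hPinit,
        Matrix.one_mulVec]
  have hyinit : y t₀ = x₀ := by
    have hF0 : F t₀ = 0 := intervalIntegral.integral_same
    simp [hy, hF0, hPinit, Matrix.one_mulVec]
  have hxy : ∀ t, x t = y t :=
    ode_unique B hBc g x y hxode hyode t₀ (by rw [hxinit, hyinit])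
  intro t
  rw [hxy t]
  have hsplit : tE (y t) = tE (P t t₀ *ᵥ x₀)
      + tE (P t t₀ *ᵥ (EuclideanSpace.equiv (Fin n) ℂ) (F t)) := by
    show tE (P t t₀ *ᵥ (x₀ + _)) = _
    rw [Matrix.mulVec_add]
    rfl
  rw [hsplit]
  congr 1
  -- commute the CLM with the interval integral
  have hL : tE (P t t₀ *ᵥ (EuclideanSpace.equiv (Fin n) ℂ) (F t))
      = (Matrix.toEuclideanCLM (n := Fin n) (𝕜 := ℂ) (P t t₀)).restrictScalars ℝ (F t) := rfl
  rw [hL, ← ContinuousLinearMap.intervalIntegral_comp_comm _ (hGc.intervalIntegrable _ _)]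
  apply intervalIntegral.integral_congr
  intro v _
  show tE (P t t₀ *ᵥ (P t₀ v *ᵥ g v)) = tE (P t v *ᵥ g v)
  rw [← P_cocycle_vec B hBc P hPinit hPode v t₀ (g v) t]

end VarConst
end Propagator

section Jordan
variable {Jm : Matrix (Fin n) (Fin n) ℂ} (hJm : IsJordanForm Jm)

private noncomputable def Dm (Jm : Matrix (Fin n) (Fin n) ℂ) : Matrix (Fin n) (Fin n) ℂ :=
  Matrix.diagonal (fun i => Jm i i)

private noncomputable def Nm (Jm : Matrix (Fin n) (Fin n) ℂ) : Matrix (Fin n) (Fin n) ℂ :=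
  Jm - Dm Jm

include hJm in
lemma Nm_apply (i j : Fin n) :
    Nm Jm i j = if (j : ℕ) = (i : ℕ) + 1 then Jm i j else 0 := by
  simp only [Nm, Dm, Matrix.sub_apply, Matrix.diagonal_apply]
  by_cases h1 : (j : ℕ) = (i : ℕ) + 1
  · rw [if_pos h1, if_neg, sub_zero]
    intro he
    rw [he] at h1
    omega
  · rw [if_neg h1]
    by_cases h2 : i = j
    · subst h2; simp
    · rw [if_neg h2, sub_zero, hJm.1 i j (fun hv => h2 (Fin.ext hv.symm)) h1]

include hJm in
lemma Nm_norm (i j : Fin n) :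
    ‖Nm Jm i j‖ ≤ if (j : ℕ) = (i : ℕ) + 1 then 1 else 0 := by
  rw [Nm_apply hJm]
  by_cases h1 : (j : ℕ) = (i : ℕ) + 1
  · rw [if_pos h1, if_pos h1]
    rcases hJm.2 i j h1 with h | ⟨h, _⟩ <;> simp [h]
  · simp [h1]

include hJm in
lemma Dm_commute : Commute (Dm Jm) (Nm Jm) := by
  unfold Commute SemiconjBy
  ext i j
  rw [Matrix.mul_apply, Matrix.mul_apply]
  simp only [Dm, Matrix.diagonal_apply, ite_mul, mul_ite, zero_mul, mul_zero]
  rw [Finset.sum_ite_eq, Finset.sum_ite_eq']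
  simp only [Finset.mem_univ, if_true]
  by_cases h1 : (j : ℕ) = (i : ℕ) + 1
  · rcases hJm.2 i j h1 with h | ⟨_, h2⟩
    · rw [Nm_apply hJm, if_pos h1, h, mul_zero, zero_mul]
    · rw [h2]; ring
  · rw [Nm_apply hJm, if_neg h1, mul_zero, zero_mul]

include hJm in
lemma Nm_pow_zero_of (k : ℕ) (i j : Fin n) (h : (j : ℕ) ≠ (i : ℕ) + k) :
    (Nm Jm ^ k) i j = 0 := by
  induction k generalizing j with
  | zero =>
    simp only [pow_zero, Matrix.one_apply]
    rw [if_neg]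
    intro he; subst he; omega
  | succ k ih =>
    rw [pow_succ, Matrix.mul_apply]
    apply Finset.sum_eq_zero
    intro l _
    by_cases hl : (l : ℕ) = (i : ℕ) + k
    · have : (j : ℕ) ≠ (l : ℕ) + 1 := by omega
      rw [Nm_apply hJm, if_neg this, mul_zero]
    · rw [ih l hl, zero_mul]

include hJm in
lemma Nm_pow_norm (k : ℕ) (i j : Fin n) : ‖(Nm Jm ^ k) i j‖ ≤ 1 := by
  induction k generalizing i j with
  | zero =>
    simp only [pow_zero, Matrix.one_apply]
    by_cases h : i = j <;> simp [h]
  | succ k ih =>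
    by_cases hij : (j : ℕ) = (i : ℕ) + (k + 1)
    · have hik : (i : ℕ) + k < n := by have := j.isLt; omega
      set l₀ : Fin n := ⟨(i : ℕ) + k, hik⟩ with hl₀
      rw [pow_succ, Matrix.mul_apply]
      rw [Finset.sum_eq_single l₀]
      · calc ‖(Nm Jm ^ k) i l₀ * Nm Jm l₀ j‖
            = ‖(Nm Jm ^ k) i l₀‖ * ‖Nm Jm l₀ j‖ := norm_mul _ _
          _ ≤ 1 * 1 := by
              apply mul_le_mul (ih i l₀) _ (norm_nonneg _) zero_le_one
              have := Nm_norm hJm l₀ j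
              rw [if_pos (by simp [hl₀]; omega)] at this
              exact this
          _ = 1 := one_mul 1
      · intro l _ hne
        have : (l : ℕ) ≠ (i : ℕ) + k := fun hv => hne (Fin.ext (by simp [hl₀, hv]))
        rw [Nm_pow_zero_of hJm k i l this, zero_mul]
      · intro h; exact absurd (Finset.mem_univ l₀) h
    · rw [Nm_pow_zero_of hJm (k+1) i j hij]
      simp

include hJm in
lemma exp_jordan_bound (lam : ℝ) (hdiag : ∀ i, (Jm i i).re ≤ lam)
    (s : ℝ) (hs : 1 ≤ s) :
    ‖NormedSpace.exp (s • Jm)‖ ≤ n * (Real.exp (lam * s) * s ^ (n - 1)) := by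
  have hs0 : (0:ℝ) ≤ s := le_trans zero_le_one hs
  have hsn : (0:ℝ) ≤ s ^ (n-1) := pow_nonneg hs0 _
  have hsplit : s • Jm = s • Dm Jm + s • Nm Jm := by
    rw [← smul_add]
    congr 1
    simp [Nm, Dm]
  have hcomm : Commute (s • Dm Jm) (s • Nm Jm) :=
    ((Dm_commute hJm).smul_left s).smul_right s
  have hDdiag : s • Dm Jm = Matrix.diagonal (fun i => s • Jm i i) := by
    ext i j
    simp only [Dm, Matrix.smul_apply, Matrix.diagonal_apply]
    by_cases h : i = j <;> simp [h]
  have hexpD : NormedSpace.exp (s • Dm Jm)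
      = Matrix.diagonal (fun i => Complex.exp (s • Jm i i)) := by
    rw [hDdiag, Matrix.exp_diagonal]
    congr 1
    funext i
    rw [Pi.exp_def, ← Complex.exp_eq_exp_ℂ]
  -- nilpotent part as a finite sum
  have hNk : ∀ k, (s • Nm Jm) ^ k = (s ^ k : ℝ) • (Nm Jm ^ k) := fun k => smul_pow s _ k
  have hzero : ∀ k ∉ Finset.range n, ((k.factorial)⁻¹ : ℂ) • (s • Nm Jm) ^ k = 0 := by
    intro k hk
    rw [Finset.mem_range, not_lt] at hk
    have hNzero : Nm Jm ^ k = 0 := by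
      ext i j
      apply Nm_pow_zero_of hJm
      have := j.isLt
      omega
    rw [hNk, hNzero, smul_zero, smul_zero]
  have hexpN : NormedSpace.exp (s • Nm Jm)
      = ∑ k ∈ Finset.range n, ((k.factorial)⁻¹ : ℂ) • (s • Nm Jm) ^ k := by
    rw [NormedSpace.exp_eq_tsum ℂ]
    exact tsum_eq_sum hzero
  -- entrywise bound
  apply opNorm_le_of_entries _ (by positivity)
  intro i j
  rw [hsplit, Matrix.exp_add_of_commute _ _ hcomm, hexpD, hexpN,
    Matrix.diagonal_mul]
  rw [norm_mul]
  have hd : ‖Complex.exp (s • Jm i i)‖ ≤ Real.exp (lam * s) := by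
    rw [Complex.norm_exp]
    apply Real.exp_le_exp.mpr
    have : (s • Jm i i).re = s * (Jm i i).re := by
      simp [Complex.real_smul]
    rw [this, mul_comm lam s]
    exact mul_le_mul_of_nonneg_left (hdiag i) hs0
  have hn : ‖(∑ k ∈ Finset.range n, ((k.factorial)⁻¹ : ℂ) • (s • Nm Jm) ^ k) i j‖
      ≤ s ^ (n - 1) := by
    rw [Matrix.sum_apply]
    calc ‖∑ k ∈ Finset.range n, (((k.factorial)⁻¹ : ℂ) • (s • Nm Jm) ^ k) i j‖
        ≤ ∑ k ∈ Finset.range n, ‖(((k.factorial)⁻¹ : ℂ) • (s • Nm Jm) ^ k) i j‖ :=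
          norm_sum_le _ _
      _ ≤ ∑ k ∈ Finset.range n, (if k = (j : ℕ) - (i : ℕ) then s ^ (n-1) else 0) := by
          apply Finset.sum_le_sum
          intro k hk
          rw [Finset.mem_range] at hk
          have hterm : ((((k.factorial)⁻¹ : ℂ) • (s • Nm Jm) ^ k) i j)
              = ((k.factorial)⁻¹ : ℂ) * (s ^ k : ℝ) * ((Nm Jm ^ k) i j) := by
            rw [hNk]
            simp [Matrix.smul_apply, smul_smul]
            ring
          rw [hterm]
          by_cases hc : (j : ℕ) = (i : ℕ) + k
          · rw [if_pos (by omega)]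
            rw [norm_mul, norm_mul]
            have h1 : ‖((k.factorial)⁻¹ : ℂ)‖ ≤ 1 := by
              rw [norm_inv]
              apply inv_le_one_of_one_le₀
              simp only [Complex.norm_natCast]
              exact_mod_cast Nat.one_le_iff_ne_zero.mpr k.factorial_ne_zero
            have h2 : ‖((s ^ k : ℝ) : ℂ)‖ ≤ s ^ (n-1) := by
              rw [Complex.norm_real, Real.norm_eq_abs, abs_of_nonneg (pow_nonneg hs0 k)]
              exact pow_le_pow_right₀ hs (by omega)
            have h3 : ‖(Nm Jm ^ k) i j‖ ≤ 1 := Nm_pow_norm hJm k i j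
            calc ‖((k.factorial)⁻¹ : ℂ)‖ * ‖((s ^ k : ℝ) : ℂ)‖ * ‖(Nm Jm ^ k) i j‖
                ≤ 1 * (s ^ (n-1)) * 1 := by
                  apply mul_le_mul _ h3 (norm_nonneg _) (by positivity)
                  exact mul_le_mul h1 h2 (norm_nonneg _) zero_le_one
              _ = s ^ (n-1) := by ring
          · rw [Nm_pow_zero_of hJm k i j hc]
            simp only [mul_zero, norm_zero]
            split <;> [exact hsn; exact le_refl 0]
      _ ≤ s ^ (n-1) := by
          rw [Finset.sum_ite_eq' (Finset.range n) ((j : ℕ) - (i : ℕ)) (fun _ => s ^ (n-1))]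
          split <;> [exact le_refl _; exact hsn]
  calc ‖Complex.exp (s • Jm i i)‖ *
        ‖(∑ k ∈ Finset.range n, ((k.factorial)⁻¹ : ℂ) • (s • Nm Jm) ^ k) i j‖
      ≤ Real.exp (lam * s) * s ^ (n-1) :=
        mul_le_mul hd hn (norm_nonneg _) (Real.exp_nonneg _)

end Jordan

section Spectrum
lemma diag_mem_spectrum (Y W Jm : Matrix (Fin n) (Fin n) ℂ) (hW : IsUnit W)
    (hconj : Y = W⁻¹ * Jm * W) (hJm : IsJordanForm Jm) (i : Fin n) :
    Jm i i ∈ spectrum ℂ Y := by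
  rw [spectrum.mem_iff]
  intro hu
  have hWdet : IsUnit W.det := (Matrix.isUnit_iff_isUnit_det W).mp hW
  have hWinv : IsUnit W⁻¹ := Matrix.isUnit_nonsing_inv_iff.mpr hW
  set μ := Jm i i with hμ
  have hkey : (algebraMap ℂ (Matrix (Fin n) (Fin n) ℂ)) μ - Y
      = W⁻¹ * ((algebraMap ℂ (Matrix (Fin n) (Fin n) ℂ)) μ - Jm) * W := by
    rw [hconj, Matrix.mul_sub, Matrix.sub_mul]
    congr 1
    have h1 : (algebraMap ℂ (Matrix (Fin n) (Fin n) ℂ)) μ = μ • (1 : Matrix (Fin n) (Fin n) ℂ) := by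
      rw [Algebra.algebraMap_eq_smul_one]
    rw [h1, mul_smul_comm, Matrix.mul_one, smul_mul_assoc, Matrix.nonsing_inv_mul W hWdet]
  rw [hkey] at hu
  have hu2 : IsUnit ((algebraMap ℂ (Matrix (Fin n) (Fin n) ℂ)) μ - Jm) := by
    have := (hW.mul hu).mul hWinv
    have heq : W * (W⁻¹ * ((algebraMap ℂ (Matrix (Fin n) (Fin n) ℂ)) μ - Jm) * W) * W⁻¹
        = (algebraMap ℂ (Matrix (Fin n) (Fin n) ℂ)) μ - Jm := by
      rw [← Matrix.mul_assoc, ← Matrix.mul_assoc, Matrix.mul_nonsing_inv W hWdet,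
        Matrix.one_mul, Matrix.mul_assoc, Matrix.mul_nonsing_inv W hWdet, Matrix.mul_one]
    rwa [heq] at this
  have htri : ((algebraMap ℂ (Matrix (Fin n) (Fin n) ℂ)) μ - Jm).BlockTriangular id := by
    intro a b hab
    simp only [id_eq] at hab
    have hba : (b : ℕ) < (a : ℕ) := hab
    simp only [Matrix.sub_apply, Matrix.algebraMap_matrix_apply]
    rw [if_neg (fun he => by subst he; omega), hJm.1 a b (by omega) (by omega), sub_zero]
  have hdet0 : ((algebraMap ℂ (Matrix (Fin n) (Fin n) ℂ)) μ - Jm).det = 0 := by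
    rw [Matrix.det_of_upperTriangular htri]
    apply Finset.prod_eq_zero (Finset.mem_univ i)
    simp [Matrix.algebraMap_matrix_apply, hμ]
  have := (Matrix.isUnit_iff_isUnit_det _).mp hu2
  rw [hdet0] at this
  exact not_isUnit_zero this

end Spectrum

lemma reduce {α : Type*} (τ : ℝ) (hτ : 0 < τ) (f : ℝ → α) (hper : ∀ t, f (t + τ) = f t)
    (t : ℝ) : ∃ u, u ∈ Ico 0 τ ∧ f t = f u := by
  have hp : Function.Periodic f τ := hper
  exact ⟨t - ⌊t/τ⌋ * τ, ⟨Int.sub_floor_div_mul_nonneg t hτ, Int.sub_floor_div_mul_lt t hτ⟩,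
    (hp.sub_int_mul_eq ⌊t/τ⌋).symm⟩

lemma P_norm_bound (τ : ℝ) (hτ : 0 < τ)
    (P X : ℝ → ℝ → Matrix (Fin n) (Fin n) ℂ) (Y W J : ℝ → Matrix (Fin n) (Fin n) ℂ)
    (hFloquet : ∀ t t₀, P t t₀ = X t t₀ * NormedSpace.exp ((t - t₀) • Y t₀))
    (hXper₁ : ∀ t t₀, X (t + τ) t₀ = X t t₀) (hXper₂ : ∀ t t₀, X t (t₀ + τ) = X t t₀)
    (hYper : ∀ t₀, Y (t₀ + τ) = Y t₀)
    (hW : ∀ u, IsUnit (W u)) (hJ : ∀ u, IsJordanForm (J u))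
    (hconj : ∀ u, Y u = (W u)⁻¹ * J u * W u)
    (lam : ℝ) (hlam : ∀ u, ∀ μ ∈ spectrum ℂ (Y u), μ.re ≤ lam)
    (c : ℝ) (hc : IsGreatest {r : ℝ | ∃ u ∈ Set.Icc (0 : ℝ) τ, r = ‖W u‖ * ‖(W u)⁻¹‖} c)
    (m : ℝ)
    (hm : IsGreatest
      {r : ℝ | ∃ t ∈ Set.Icc (0 : ℝ) τ, ∃ t' ∈ Set.Icc (0 : ℝ) τ, r = ‖X t t'‖} m)
    (a b : ℝ) (hab : 1 ≤ b - a) :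
    ‖P b a‖ ≤ m * (c * ((n : ℝ) * (Real.exp (lam * (b - a)) * (b - a) ^ (n - 1)))) := by
  obtain ⟨u, hu, hYa⟩ := reduce τ hτ Y hYper a
  obtain ⟨u2, hu2, hX1⟩ := reduce τ hτ (fun v => X b v) (fun v => hXper₂ b v) a
  obtain ⟨u1, hu1, hX2⟩ := reduce τ hτ (fun w => X w u2) (fun w => hXper₁ w u2) b
  have hXm : ‖X b a‖ ≤ m := by
    rw [show X b a = X u1 u2 by rw [hX1, hX2]]
    exact hm.2 ⟨u1, Ico_subset_Icc_self hu1, u2, Ico_subset_Icc_self hu2, rfl⟩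
  have hcW : ‖W u‖ * ‖(W u)⁻¹‖ ≤ c := hc.2 ⟨u, Ico_subset_Icc_self hu, rfl⟩
  have hdiag : ∀ i, (J u i i).re ≤ lam := fun i =>
    hlam u _ (diag_mem_spectrum (Y u) (W u) (J u) (hW u) (hconj u) (hJ u) i)
  have hexp : ‖NormedSpace.exp ((b - a) • J u)‖
      ≤ n * (Real.exp (lam * (b - a)) * (b - a) ^ (n - 1)) :=
    exp_jordan_bound (hJ u) lam hdiag (b - a) hab
  have hconjexp : NormedSpace.exp ((b - a) • Y u)
      = (W u)⁻¹ * NormedSpace.exp ((b - a) • J u) * W u := by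
    rw [hconj u]
    rw [show (b - a) • ((W u)⁻¹ * J u * W u) = (W u)⁻¹ * ((b - a) • J u) * W u by
      rw [mul_smul_comm, smul_mul_assoc]]
    exact Matrix.exp_conj' (W u) _ (hW u)
  set D : ℝ := Real.exp (lam * (b - a)) * (b - a) ^ (n - 1) with hD
  have hD0 : 0 ≤ D := by positivity
  have hnD0 : (0:ℝ) ≤ n * D := by positivity
  have e1 : ‖NormedSpace.exp ((b - a) • Y a)‖ ≤ (‖W u‖ * ‖(W u)⁻¹‖) * ((n:ℝ) * D) := by
    rw [hYa, hconjexp]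
    calc ‖(W u)⁻¹ * NormedSpace.exp ((b - a) • J u) * W u‖
        ≤ ‖(W u)⁻¹ * NormedSpace.exp ((b - a) • J u)‖ * ‖W u‖ :=
          Matrix.l2_opNorm_mul _ _
      _ ≤ (‖(W u)⁻¹‖ * ‖NormedSpace.exp ((b - a) • J u)‖) * ‖W u‖ :=
          mul_le_mul_of_nonneg_right (Matrix.l2_opNorm_mul _ _) (norm_nonneg _)
      _ ≤ (‖(W u)⁻¹‖ * ((n:ℝ) * D)) * ‖W u‖ :=
          mul_le_mul_of_nonneg_right
            (mul_le_mul_of_nonneg_left hexp (norm_nonneg _)) (norm_nonneg _)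
      _ = (‖W u‖ * ‖(W u)⁻¹‖) * ((n:ℝ) * D) := by ring
  have m0 : (0:ℝ) ≤ ‖X b a‖ := norm_nonneg _
  calc ‖P b a‖ = ‖X b a * NormedSpace.exp ((b - a) • Y a)‖ := by rw [hFloquet]
    _ ≤ ‖X b a‖ * ‖NormedSpace.exp ((b - a) • Y a)‖ := Matrix.l2_opNorm_mul _ _
    _ ≤ m * ((‖W u‖ * ‖(W u)⁻¹‖) * ((n:ℝ) * D)) :=
        mul_le_mul hXm e1 (norm_nonneg _) (le_trans m0 hXm)
    _ ≤ m * (c * ((n:ℝ) * D)) := by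
        apply mul_le_mul_of_nonneg_left _ (le_trans m0 hXm)
        exact mul_le_mul_of_nonneg_right hcW hnD0

end APaux

/-- **Asymptotic periodicity.** For a stable `τ`-periodic system
`ẋ = B(t)x + g(t)` with Floquet decomposition `P(t,t₀) = X(t,t₀) e^{(t−t₀)Y(t₀)}`,
all Floquet exponents having real part at most `λ < 0`, the solution with
`x(t₀) = x₀` satisfies, for `t − t₀ > 1`,
`‖x(t+τ) − x(t)‖ ≤ e^{λ(t−t₀)} m c n (t−t₀+τ)^{n−1} (2‖x₀‖ + τ max_{v∈[0,τ]}‖g(v)‖)`,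
where `m = max_{(t,t')∈[0,τ]²} ‖X(t,t')‖` and `c = max_{u∈[0,τ]} ‖W(u)‖‖W(u)⁻¹‖` is the
conditioning constant of the Jordan transformations `W(u)` of `Y(u)`. -/
theorem asymptotic_periodicity (n : ℕ) (τ : ℝ) (hτ : 0 < τ)
    (B : ℝ → Matrix (Fin n) (Fin n) ℂ) (hBc : Continuous B) (hBper : ∀ t, B (t + τ) = B t)
    (g : ℝ → Fin n → ℂ) (hgc : Continuous g) (hgper : ∀ t, g (t + τ) = g t)
    (P : ℝ → ℝ → Matrix (Fin n) (Fin n) ℂ)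
    (hPinit : ∀ t₀, P t₀ t₀ = 1)
    (hPode : ∀ t t₀ i j, HasDerivAt (fun s => P s t₀ i j) ((B t * P t t₀) i j) t)
    (X : ℝ → ℝ → Matrix (Fin n) (Fin n) ℂ) (Y : ℝ → Matrix (Fin n) (Fin n) ℂ)
    (hFloquet : ∀ t t₀, P t t₀ = X t t₀ * NormedSpace.exp ((t - t₀) • Y t₀))
    (hXper₁ : ∀ t t₀, X (t + τ) t₀ = X t t₀) (hXper₂ : ∀ t t₀, X t (t₀ + τ) = X t t₀)
    (hYper : ∀ t₀, Y (t₀ + τ) = Y t₀) (hXinit : ∀ t₀, X t₀ t₀ = 1)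
    (W J : ℝ → Matrix (Fin n) (Fin n) ℂ)
    (hW : ∀ u, IsUnit (W u)) (hJ : ∀ u, IsJordanForm (J u))
    (hconj : ∀ u, Y u = (W u)⁻¹ * J u * W u)
    (lam : ℝ) (hlamneg : lam < 0)
    (hlam : ∀ u, ∀ μ ∈ spectrum ℂ (Y u), μ.re ≤ lam)
    (c : ℝ) (hc : IsGreatest {r : ℝ | ∃ u ∈ Set.Icc (0 : ℝ) τ, r = ‖W u‖ * ‖(W u)⁻¹‖} c)
    (m : ℝ)
    (hm : IsGreatest
      {r : ℝ | ∃ t ∈ Set.Icc (0 : ℝ) τ, ∃ t' ∈ Set.Icc (0 : ℝ) τ, r = ‖X t t'‖} m)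
    (gmax : ℝ) (hgmax : IsGreatest {r : ℝ | ∃ v ∈ Set.Icc (0 : ℝ) τ, r = eunorm (g v)} gmax)
    (t₀ : ℝ) (x₀ : Fin n → ℂ) (x : ℝ → Fin n → ℂ) (hxinit : x t₀ = x₀)
    (hxode : ∀ t i, HasDerivAt (fun s => x s i) ((B t).mulVec (x t) i + g t i) t) :
    ∀ t : ℝ, 1 < t - t₀ →
      eunorm (x (t + τ) - x t) ≤
        Real.exp (lam * (t - t₀)) * m * c * n * (t - t₀ + τ) ^ (n - 1) *
          (2 * eunorm x₀ + τ * gmax) := by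
  intro t ht
  -- nonnegativity facts
  have hm0 : 0 ≤ m := by
    obtain ⟨t1, _, t2, _, heq⟩ := hm.1
    rw [heq]; exact norm_nonneg _
  have hc0 : 0 ≤ c := by
    obtain ⟨u, _, heq⟩ := hc.1
    rw [heq]; positivity
  have hgmax0 : 0 ≤ gmax := by
    obtain ⟨v, _, heq⟩ := hgmax.1
    rw [heq, APaux.eunorm_eq]; exact norm_nonneg _
  set K : ℝ := Real.exp (lam * (t - t₀)) * m * c * n * (t - t₀ + τ) ^ (n - 1) with hK
  -- uniform bound on the propagator norms we need
  have hPbound : ∀ a b : ℝ, t - t₀ ≤ b - a → b - a ≤ t - t₀ + τ → ‖P b a‖ ≤ K := by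
    intro a b h1 h2
    have hab : 1 ≤ b - a := le_trans (le_of_lt ht) h1
    refine le_trans (APaux.P_norm_bound τ hτ P X Y W J hFloquet hXper₁ hXper₂ hYper hW hJ
      hconj lam hlam c hc m hm a b hab) ?_
    have hexp : Real.exp (lam * (b - a)) ≤ Real.exp (lam * (t - t₀)) := by
      apply Real.exp_le_exp.mpr
      exact mul_le_mul_of_nonpos_left h1 (le_of_lt hlamneg)
    have hpow : (b - a) ^ (n - 1) ≤ (t - t₀ + τ) ^ (n - 1) :=
      pow_le_pow_left₀ (by linarith) h2 _
    have hDD : Real.exp (lam * (b - a)) * (b - a) ^ (n - 1)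
        ≤ Real.exp (lam * (t - t₀)) * (t - t₀ + τ) ^ (n - 1) :=
      mul_le_mul hexp hpow (by positivity) (Real.exp_nonneg _)
    calc m * (c * ((n : ℝ) * (Real.exp (lam * (b - a)) * (b - a) ^ (n - 1))))
        ≤ m * (c * ((n : ℝ) * (Real.exp (lam * (t - t₀)) * (t - t₀ + τ) ^ (n - 1)))) := by
          apply mul_le_mul_of_nonneg_left _ hm0
          apply mul_le_mul_of_nonneg_left _ hc0
          exact mul_le_mul_of_nonneg_left hDD (Nat.cast_nonneg n)
      _ = K := by rw [hK]; ring
  have hK0 : 0 ≤ K := le_trans (norm_nonneg (P t t₀)) (hPbound t₀ t (le_refl _) (by linarith))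
  -- bound on g
  have hgbd : ∀ v, ‖APaux.tE (g v)‖ ≤ gmax := by
    intro v
    obtain ⟨u, hu, heq⟩ := APaux.reduce τ hτ g hgper v
    rw [show APaux.tE (g v) = APaux.tE (g u) by rw [heq]]
    exact hgmax.2 ⟨u, Ico_subset_Icc_self hu, rfl⟩
  -- variation of constants at `t + τ` and `t`
  have hvc := APaux.var_const B hBc P hPinit hPode g hgc t₀ x₀ x hxinit hxode
  -- rewrite the formula at `t + τ`
  have hPshift : ∀ v, P (t + τ) v = P t (v - τ) := by
    intro v
    have := APaux.P_periodic B hBc P hPinit hPode τ hBper (v - τ) t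
    rwa [sub_add_cancel] at this
  have hgshift : ∀ v, g v = g (v - τ) := by
    intro v
    have := hgper (v - τ)
    rw [sub_add_cancel] at this
    exact this
  have hintcont : ∀ a : ℝ, Continuous fun v => APaux.tE (P a v *ᵥ g v) :=
    fun a => APaux.integrand_cont B hBc P hPinit hPode g hgc a
  have hshift_integrand : ∀ v, APaux.tE (P (t + τ) v *ᵥ g v)
      = (fun u => APaux.tE (P t u *ᵥ g u)) (v - τ) := by
    intro v
    simp only []
    rw [← hPshift v, ← hgshift v]
  have hform : APaux.tE (x (t + τ)) - APaux.tE (x t)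
      = (APaux.tE (P (t + τ) t₀ *ᵥ x₀) - APaux.tE (P t t₀ *ᵥ x₀))
        + ∫ v in (t₀ - τ)..t₀, APaux.tE (P t v *ᵥ g v) := by
    have h1 := hvc (t + τ)
    have h2 := hvc t
    have h3 : (∫ v in t₀..(t + τ), APaux.tE (P (t + τ) v *ᵥ g v))
        = ∫ v in (t₀ - τ)..t, APaux.tE (P t v *ᵥ g v) := by
      rw [intervalIntegral.integral_congr (g := fun v =>
        (fun u => APaux.tE (P t u *ᵥ g u)) (v - τ)) (fun v _ => hshift_integrand v)]
      rw [intervalIntegral.integral_comp_sub_right (fun u => APaux.tE (P t u *ᵥ g u)) τ]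
      norm_num
    have h4 : (∫ v in (t₀ - τ)..t, APaux.tE (P t v *ᵥ g v))
        = (∫ v in (t₀ - τ)..t₀, APaux.tE (P t v *ᵥ g v))
          + ∫ v in t₀..t, APaux.tE (P t v *ᵥ g v) :=
      (intervalIntegral.integral_add_adjacent_intervals
        ((hintcont t).intervalIntegrable _ _) ((hintcont t).intervalIntegrable _ _)).symm
    rw [h1, h2, h3, h4]
    abel
  -- bound on the integral term
  have hint_bound : ‖∫ v in (t₀ - τ)..t₀, APaux.tE (P t v *ᵥ g v)‖ ≤ K * gmax * τ := by
    have hbd : ∀ v ∈ Set.uIoc (t₀ - τ) t₀, ‖APaux.tE (P t v *ᵥ g v)‖ ≤ K * gmax := by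
      intro v hv
      rw [Set.uIoc_of_le (by linarith)] at hv
      have hv1 : t₀ - τ < v := hv.1
      have hv2 : v ≤ t₀ := hv.2
      have hPv : ‖P t v‖ ≤ K := hPbound v t (by linarith) (by linarith)
      calc ‖APaux.tE (P t v *ᵥ g v)‖ ≤ ‖P t v‖ * ‖APaux.tE (g v)‖ :=
            APaux.tE_mulVec_norm _ _
        _ ≤ K * gmax := mul_le_mul hPv (hgbd v) (norm_nonneg _) hK0
    have := intervalIntegral.norm_integral_le_of_norm_le_const hbd
    rwa [show |t₀ - (t₀ - τ)| = τ by rw [abs_of_nonneg (by linarith)]; ring] at this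
  -- assemble
  have hnorm : eunorm (x (t + τ) - x t) = ‖APaux.tE (x (t + τ)) - APaux.tE (x t)‖ := rfl
  rw [hnorm, hform]
  have hb1 : ‖APaux.tE (P (t + τ) t₀ *ᵥ x₀)‖ ≤ K * ‖APaux.tE x₀‖ := by
    refine le_trans (APaux.tE_mulVec_norm _ _) ?_
    exact mul_le_mul_of_nonneg_right (hPbound t₀ (t + τ) (by linarith) (by linarith))
      (norm_nonneg _)
  have hb2 : ‖APaux.tE (P t t₀ *ᵥ x₀)‖ ≤ K * ‖APaux.tE x₀‖ := by
    refine le_trans (APaux.tE_mulVec_norm _ _) ?_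
    exact mul_le_mul_of_nonneg_right (hPbound t₀ t (le_refl _) (by linarith)) (norm_nonneg _)
  calc ‖(APaux.tE (P (t + τ) t₀ *ᵥ x₀) - APaux.tE (P t t₀ *ᵥ x₀))
        + ∫ v in (t₀ - τ)..t₀, APaux.tE (P t v *ᵥ g v)‖
      ≤ ‖APaux.tE (P (t + τ) t₀ *ᵥ x₀) - APaux.tE (P t t₀ *ᵥ x₀)‖
        + ‖∫ v in (t₀ - τ)..t₀, APaux.tE (P t v *ᵥ g v)‖ := norm_add_le _ _
    _ ≤ (‖APaux.tE (P (t + τ) t₀ *ᵥ x₀)‖ + ‖APaux.tE (P t t₀ *ᵥ x₀)‖)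
        + ‖∫ v in (t₀ - τ)..t₀, APaux.tE (P t v *ᵥ g v)‖ := by
        apply add_le_add_left (norm_sub_le _ _)
    _ ≤ (K * ‖APaux.tE x₀‖ + K * ‖APaux.tE x₀‖) + K * gmax * τ := by
        apply add_le_add (add_le_add hb1 hb2) hint_bound
    _ = K * (2 * eunorm x₀ + τ * gmax) := by
        rw [APaux.eunorm_eq]; ring
    _ = Real.exp (lam * (t - t₀)) * m * c * n * (t - t₀ + τ) ^ (n - 1) *
          (2 * eunorm x₀ + τ * gmax) := by rw [hK]
end

section
/- If A is Hurwitz, then the Lyapunov equation A V + V Aᵀ + D = 0 with D symmetric positive semidefinite has the unique solution V = ∫₀^∞ e^{sA} D e^{sAᵀ} ds, and this V is symmetric positive semidefinite. -/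
open Matrix MeasureTheory Set Filter NormedSpace
open scoped Topology

namespace LyapunovAux

variable {n : ℕ}

theorem exp_smul_one (c : ℂ) :
    exp (c • (1 : Matrix (Fin n) (Fin n) ℂ)) = Complex.exp c • 1 := by
  rw [Matrix.smul_one_eq_diagonal, Matrix.exp_diagonal]
  have h : exp (fun _ : Fin n => c) = fun _ : Fin n => Complex.exp c := by
    funext i
    exact (Pi.coe_exp _ i).trans (congrFun Complex.exp_eq_exp_ℂ c).symm
  rw [h, ← Matrix.smul_one_eq_diagonal]

/-- On a generalized eigenvector, `exp (s • B)` acts as `e^{sμ}` times a polynomial. -/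
theorem exp_smul_mulVec_genEigen (B : Matrix (Fin n) (Fin n) ℂ) (μ : ℂ) (k : ℕ)
    (v : Fin n → ℂ) (hv : (B - μ • 1) ^ k *ᵥ v = 0) (s : ℝ) :
    exp (s • B) *ᵥ v = Complex.exp (s * μ) •
      ∑ j ∈ Finset.range k, ((s : ℂ) ^ j * (j.factorial : ℂ)⁻¹) • ((B - μ • 1) ^ j *ᵥ v) := by
  set N : Matrix (Fin n) (Fin n) ℂ := B - μ • 1 with hN
  have hsplit : s • B = ((s : ℂ) * μ) • (1 : Matrix (Fin n) (Fin n) ℂ) + s • N := by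
    rw [hN, smul_sub, ← smul_assoc, Complex.real_smul]
    abel
  have hcomm : Commute (((s : ℂ) * μ) • (1 : Matrix (Fin n) (Fin n) ℂ)) (s • N) :=
    (Commute.one_left (s • N)).smul_left _
  have step1 : exp (s • B) = Complex.exp ((s : ℂ) * μ) • exp (s • N) := by
    rw [hsplit, Matrix.exp_add_of_commute _ _ hcomm, exp_smul_one, smul_mul_assoc, one_mul]
  rw [step1, Matrix.smul_mulVec]
  congr 1
  -- step 2 : exp (s • N) *ᵥ v = finite sum
  letI : NormedRing (Matrix (Fin n) (Fin n) ℂ) := Matrix.linftyOpNormedRing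
  letI : NormedAlgebra ℂ (Matrix (Fin n) (Fin n) ℂ) := Matrix.linftyOpNormedAlgebra
  show exp (s • N) *ᵥ v = ∑ j ∈ Finset.range k,
    ((s : ℂ) ^ j * (j.factorial : ℂ)⁻¹) • (N ^ j *ᵥ v)
  let Lv : Matrix (Fin n) (Fin n) ℂ →ₗ[ℂ] (Fin n → ℂ) :=
    { toFun := fun M => M *ᵥ v
      map_add' := fun M₁ M₂ => Matrix.add_mulVec M₁ M₂ v
      map_smul' := fun c M => Matrix.smul_mulVec c M v }
  let L : Matrix (Fin n) (Fin n) ℂ →L[ℂ] (Fin n → ℂ) := LinearMap.toContinuousLinearMap Lv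
  have hsum : Summable fun j : ℕ => ((j.factorial : ℂ)⁻¹) • (s • N) ^ j :=
    expSeries_summable' (𝕂 := ℂ) (s • N)
  have hLt : ((∑' j : ℕ, ((j.factorial : ℂ)⁻¹) • (s • N) ^ j) *ᵥ v)
      = ∑' j : ℕ, (((j.factorial : ℂ)⁻¹) • (s • N) ^ j) *ᵥ v := L.map_tsum hsum
  rw [exp_eq_tsum ℂ, hLt, tsum_eq_sum (s := Finset.range k) ?hvanish]
  · refine Finset.sum_congr rfl fun j hj => ?_
    rw [smul_pow, Matrix.smul_mulVec, Matrix.smul_mulVec,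
      ← algebraMap_smul (R := ℝ) ℂ (s ^ j) (N ^ j *ᵥ v), smul_smul]
    congr 1
    simp [Complex.coe_algebraMap]
    ring
  case hvanish =>
    intro j hj
    rw [Finset.mem_range, not_lt] at hj
    have hz : N ^ j *ᵥ v = 0 := by
      have hjk : N ^ j = N ^ (j - k) * N ^ k := by rw [← pow_add]; congr 1; omega
      rw [hjk, ← Matrix.mulVec_mulVec, hv, Matrix.mulVec_zero]
    rw [smul_pow, Matrix.smul_mulVec, Matrix.smul_mulVec, hz, smul_zero, smul_zero]

end LyapunovAux

namespace LyapunovAux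

/-- Exponential decay upper bound on `[0, ∞)`. -/
def Decays (g : ℝ → ℝ) : Prop :=
  ∃ C α : ℝ, 0 ≤ C ∧ 0 < α ∧ ∀ s : ℝ, 0 ≤ s → g s ≤ C * Real.exp (-α * s)

theorem Decays.mono {g h : ℝ → ℝ} (hg : Decays g) (hle : ∀ s, 0 ≤ s → h s ≤ g s) : Decays h := by
  obtain ⟨C, α, hC, hα, hb⟩ := hg
  exact ⟨C, α, hC, hα, fun s hs => (hle s hs).trans (hb s hs)⟩

theorem decays_zero : Decays fun _ => (0 : ℝ) :=
  ⟨0, 1, le_rfl, one_pos, fun s _ => by simp⟩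

theorem Decays.add {g h : ℝ → ℝ} (hg : Decays g) (hh : Decays h) :
    Decays fun s => g s + h s := by
  obtain ⟨C₁, α₁, hC₁, hα₁, hb₁⟩ := hg
  obtain ⟨C₂, α₂, hC₂, hα₂, hb₂⟩ := hh
  refine ⟨C₁ + C₂, min α₁ α₂, by positivity, lt_min hα₁ hα₂, fun s hs => ?_⟩
  have e₁ : Real.exp (-α₁ * s) ≤ Real.exp (-min α₁ α₂ * s) := by
    apply Real.exp_le_exp.2
    have := mul_le_mul_of_nonneg_right (min_le_left α₁ α₂) hs
    linarith
  have e₂ : Real.exp (-α₂ * s) ≤ Real.exp (-min α₁ α₂ * s) := by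
    apply Real.exp_le_exp.2
    have := mul_le_mul_of_nonneg_right (min_le_right α₁ α₂) hs
    linarith
  calc g s + h s ≤ C₁ * Real.exp (-α₁ * s) + C₂ * Real.exp (-α₂ * s) :=
        add_le_add (hb₁ s hs) (hb₂ s hs)
    _ ≤ C₁ * Real.exp (-min α₁ α₂ * s) + C₂ * Real.exp (-min α₁ α₂ * s) :=
        add_le_add (mul_le_mul_of_nonneg_left e₁ hC₁) (mul_le_mul_of_nonneg_left e₂ hC₂)
    _ = (C₁ + C₂) * Real.exp (-min α₁ α₂ * s) := by ring

theorem decays_sum {ι : Type*} (t : Finset ι) (g : ι → ℝ → ℝ)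
    (h : ∀ i ∈ t, Decays (g i)) : Decays fun s => ∑ i ∈ t, g i s := by
  classical
  induction t using Finset.induction_on with
  | empty => simpa using decays_zero
  | @insert a t ha ih =>
      have h1 : Decays fun s => g a s + ∑ i ∈ t, g i s :=
        (h a (t.mem_insert_self a)).add (ih fun i hi => h i (Finset.mem_insert_of_mem hi))
      exact h1.mono fun s _ => by rw [Finset.sum_insert ha]

theorem decays_mulVec (B : Matrix (Fin n) (Fin n) ℂ)
    (hB : ∀ μ ∈ spectrum ℂ B, μ.re < 0) (x : Fin n → ℂ) :
    Decays fun s => ‖exp (s • B) *ᵥ x‖ := by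
  set f : Module.End ℂ (Fin n → ℂ) := Matrix.toLinAlgEquiv' B with hf
  have hx : x ∈ ⨆ μ : ℂ, f.maxGenEigenspace μ := by
    rw [Module.End.iSup_maxGenEigenspace_eq_top]; exact Submodule.mem_top
  refine Submodule.iSup_induction _ (motive := fun v => Decays fun s => ‖exp (s • B) *ᵥ v‖)
    hx ?_ ?_ ?_
  · -- elements of a generalized eigenspace
    intro μ v hv
    by_cases hv0 : v = 0
    · subst hv0
      exact decays_zero.mono fun s _ => by simp [Matrix.mulVec_zero]
    obtain ⟨k, hk⟩ := (Module.End.mem_maxGenEigenspace f μ v).1 hv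
    have hNv : (B - μ • 1) ^ k *ᵥ v = 0 := by
      have h1 : Matrix.toLinAlgEquiv' ((B - μ • 1) ^ k) v = 0 := by
        rw [map_pow, map_sub, _root_.map_smul, _root_.map_one]; exact hk
      rwa [Matrix.toLinAlgEquiv'_apply] at h1
    have hμ : μ ∈ spectrum ℂ B := by
      rw [← AlgEquiv.spectrum_eq (Matrix.toLinAlgEquiv' (n := Fin n) (R := ℂ)),
        ← Module.End.hasEigenvalue_iff_mem_spectrum]
      apply Module.End.hasEigenvalue_of_hasGenEigenvalue (k := k)
      exact (Submodule.ne_bot_iff _).mpr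
        ⟨v, Module.End.mem_genEigenspace_nat.mpr (LinearMap.mem_ker.mpr hk), hv0⟩
    have hre := hB μ hμ
    set α : ℝ := -μ.re / 2 with hα
    have hαpos : 0 < α := by rw [hα]; linarith
    refine ⟨∑ j ∈ Finset.range k, ‖(B - μ • 1) ^ j *ᵥ v‖ / α ^ j, α, ?_, hαpos, ?_⟩
    · positivity
    intro s hs
    show ‖exp (s • B) *ᵥ v‖ ≤
      (∑ j ∈ Finset.range k, ‖(B - μ • 1) ^ j *ᵥ v‖ / α ^ j) * Real.exp (-α * s)
    rw [exp_smul_mulVec_genEigen B μ k v hNv s, norm_smul]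
    have h2 : ‖Complex.exp ((s : ℂ) * μ)‖ = Real.exp (s * μ.re) := by
      rw [Complex.norm_exp]
      congr 1
      simp
    have h3 : ‖∑ j ∈ Finset.range k, ((s : ℂ) ^ j * (j.factorial : ℂ)⁻¹) • ((B - μ • 1) ^ j *ᵥ v)‖
        ≤ ∑ j ∈ Finset.range k, (s ^ j * ((j.factorial : ℝ))⁻¹) * ‖(B - μ • 1) ^ j *ᵥ v‖ := by
      refine (norm_sum_le _ _).trans (Finset.sum_le_sum fun j _ => ?_)
      rw [norm_smul]
      apply mul_le_mul_of_nonneg_right (le_of_eq ?_) (norm_nonneg _)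
      rw [norm_mul, norm_pow, norm_inv]
      have hns : ‖(s : ℂ)‖ = s := by
        rw [Complex.norm_real, Real.norm_eq_abs, abs_of_nonneg hs]
      have hnf : ‖(j.factorial : ℂ)‖ = (j.factorial : ℝ) := by
        simp
      rw [hns, hnf]
    have h4 : ∀ j : ℕ, s ^ j * ((j.factorial : ℝ))⁻¹ ≤ Real.exp (α * s) / α ^ j := by
      intro j
      rw [le_div_iff₀ (pow_pos hαpos j)]
      have h5 : (α * s) ^ j / (j.factorial : ℝ) ≤ Real.exp (α * s) := by
        calc (α * s) ^ j / (j.factorial : ℝ)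
            ≤ ∑ i ∈ Finset.range (j + 1), (α * s) ^ i / (i.factorial : ℝ) :=
              Finset.single_le_sum (f := fun i => (α * s) ^ i / (i.factorial : ℝ))
                (fun i _ => by positivity) (Finset.self_mem_range_succ j)
          _ ≤ Real.exp (α * s) := Real.sum_le_exp_of_nonneg (by positivity) _
      calc s ^ j * (↑j.factorial)⁻¹ * α ^ j = (α * s) ^ j / (j.factorial : ℝ) := by
            rw [mul_pow]; ring
        _ ≤ _ := h5
    have hexp : Real.exp (s * μ.re) * Real.exp (α * s) = Real.exp (-α * s) := by
      rw [← Real.exp_add]; congr 1; rw [hα]; ring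
    calc ‖Complex.exp ((s : ℂ) * μ)‖ *
          ‖∑ j ∈ Finset.range k, ((s : ℂ) ^ j * (j.factorial : ℂ)⁻¹) • ((B - μ • 1) ^ j *ᵥ v)‖
        ≤ Real.exp (s * μ.re) *
          ∑ j ∈ Finset.range k, (s ^ j * ((j.factorial : ℝ))⁻¹) * ‖(B - μ • 1) ^ j *ᵥ v‖ := by
          rw [h2]; exact mul_le_mul_of_nonneg_left h3 (Real.exp_pos _).le
      _ ≤ Real.exp (s * μ.re) *
          ∑ j ∈ Finset.range k, (Real.exp (α * s) / α ^ j) * ‖(B - μ • 1) ^ j *ᵥ v‖ := by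
          refine mul_le_mul_of_nonneg_left
            (Finset.sum_le_sum fun j _ =>
              mul_le_mul_of_nonneg_right (h4 j) (norm_nonneg _)) (Real.exp_pos _).le
      _ = (∑ j ∈ Finset.range k, ‖(B - μ • 1) ^ j *ᵥ v‖ / α ^ j) * Real.exp (-α * s) := by
          rw [Finset.mul_sum, Finset.sum_mul]
          refine Finset.sum_congr rfl fun j _ => ?_
          have h6 : Real.exp (s * μ.re) * (Real.exp (α * s) / α ^ j * ‖(B - μ • 1) ^ j *ᵥ v‖)
              = (Real.exp (s * μ.re) * Real.exp (α * s)) * (‖(B - μ • 1) ^ j *ᵥ v‖ / α ^ j) := by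
            ring
          rw [h6, hexp]; ring
  · exact decays_zero.mono fun s _ => by simp [Matrix.mulVec_zero]
  · intro x y hxD hyD
    exact (hxD.add hyD).mono fun s _ => by
      rw [Matrix.mulVec_add]; exact norm_add_le _ _

end LyapunovAux

namespace LyapunovAux

theorem exp_map_ofReal (A : Matrix (Fin n) (Fin n) ℝ) (s : ℝ) :
    (exp (s • A)).map Complex.ofReal = exp (s • A.map Complex.ofReal) := by
  letI : NormedRing (Matrix (Fin n) (Fin n) ℝ) := Matrix.linftyOpNormedRing
  letI : NormedAlgebra ℝ (Matrix (Fin n) (Fin n) ℝ) := Matrix.linftyOpNormedAlgebra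
  letI : NormedRing (Matrix (Fin n) (Fin n) ℂ) := Matrix.linftyOpNormedRing
  letI : NormedAlgebra ℝ (Matrix (Fin n) (Fin n) ℂ) := Matrix.linftyOpNormedAlgebra
  letI : NormedAlgebra ℂ (Matrix (Fin n) (Fin n) ℂ) := Matrix.linftyOpNormedAlgebra
  letI : NormedAlgebra ℚ (Matrix (Fin n) (Fin n) ℝ) := NormedAlgebra.restrictScalars ℚ ℝ _
  have hcont : Continuous
      (Complex.ofRealHom.mapMatrix : Matrix (Fin n) (Fin n) ℝ →+* Matrix (Fin n) (Fin n) ℂ) :=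
    continuous_id.matrix_map Complex.continuous_ofReal
  have h2 : Complex.ofRealHom.mapMatrix (s • A) = s • A.map Complex.ofReal := by
    ext i j
    simp [Matrix.map_apply, Complex.real_smul]
  refine (map_exp _ hcont (s • A)).trans ?_
  rw [h2]
  rfl

theorem decays_entry (A : Matrix (Fin n) (Fin n) ℝ)
    (hA : ∀ μ ∈ spectrum ℂ (A.map Complex.ofReal), μ.re < 0) :
    ∃ C α : ℝ, 0 < C ∧ 0 < α ∧ ∀ s : ℝ, 0 ≤ s → ∀ i j,
      |exp (s • A) i j| ≤ C * Real.exp (-α * s) := by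
  set B := A.map Complex.ofReal with hB
  have hg : Decays fun s => ∑ j : Fin n, ‖exp (s • B) *ᵥ Pi.single j 1‖ :=
    decays_sum Finset.univ _ fun j _ => decays_mulVec B hA _
  obtain ⟨C, α, hC, hα, hb⟩ := hg
  refine ⟨C + 1, α, by linarith, hα, fun s hs i j => ?_⟩
  have h1 : |exp (s • A) i j| = ‖exp (s • B) i j‖ := by
    rw [← exp_map_ofReal, Matrix.map_apply, Complex.norm_real, Real.norm_eq_abs]
  have h3 : (exp (s • B) *ᵥ Pi.single j 1) i = exp (s • B) i j := by
    simp [Matrix.mulVec_single]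
  have h2 : ‖exp (s • B) i j‖ ≤ ‖exp (s • B) *ᵥ Pi.single j 1‖ := by
    rw [← h3]; exact norm_le_pi_norm _ i
  have h4 : ‖exp (s • B) *ᵥ Pi.single j 1‖
      ≤ ∑ j' : Fin n, ‖exp (s • B) *ᵥ Pi.single j' 1‖ :=
    Finset.single_le_sum (f := fun j' => ‖exp (s • B) *ᵥ Pi.single j' 1‖)
      (fun _ _ => norm_nonneg _) (Finset.mem_univ j)
  have h5 : C * Real.exp (-α * s) ≤ (C + 1) * Real.exp (-α * s) := by
    have := (Real.exp_pos (-α * s)).le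
    nlinarith
  calc |exp (s • A) i j| = ‖exp (s • B) i j‖ := h1
    _ ≤ ‖exp (s • B) *ᵥ Pi.single j 1‖ := h2
    _ ≤ ∑ j' : Fin n, ‖exp (s • B) *ᵥ Pi.single j' 1‖ := h4
    _ ≤ C * Real.exp (-α * s) := hb s hs
    _ ≤ (C + 1) * Real.exp (-α * s) := h5

end LyapunovAux

namespace LyapunovAux

/-- The integrand of the Lyapunov integral. -/
noncomputable def Phi (A X : Matrix (Fin n) (Fin n) ℝ) (s : ℝ) : Matrix (Fin n) (Fin n) ℝ :=
  exp (s • A) * X * exp (s • Aᵀ)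

theorem Phi_zero (A X : Matrix (Fin n) (Fin n) ℝ) : Phi A X 0 = X := by
  simp [Phi, exp_zero]

theorem Phi_comm (A X : Matrix (Fin n) (Fin n) ℝ) (s : ℝ) :
    A * Phi A X s + Phi A X s * Aᵀ = Phi A (A * X + X * Aᵀ) s := by
  have c1 : A * exp (s • A) = exp (s • A) * A :=
    (((Commute.refl A).smul_right s).exp_right).eq
  have c2 : Aᵀ * exp (s • Aᵀ) = exp (s • Aᵀ) * Aᵀ :=
    (((Commute.refl Aᵀ).smul_right s).exp_right).eq
  simp only [Phi]
  set E := exp (s • A) with hE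
  set F := exp (s • Aᵀ) with hF
  have t1 : A * (E * X * F) = E * A * X * F := by
    rw [← mul_assoc, ← mul_assoc, c1]
  have t2 : E * X * F * Aᵀ = E * X * Aᵀ * F := by
    rw [mul_assoc, ← c2, ← mul_assoc]
  rw [t1, t2]
  noncomm_ring

theorem Phi_transpose (A D : Matrix (Fin n) (Fin n) ℝ) (hD : D.IsSymm) (s : ℝ) :
    (Phi A D s)ᵀ = Phi A D s := by
  have hE : exp (s • Aᵀ) = (exp (s • A))ᵀ := by
    rw [← Matrix.transpose_smul, Matrix.exp_transpose]
  simp only [Phi, hE, Matrix.transpose_mul, Matrix.transpose_transpose, hD.eq, Matrix.mul_assoc]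

theorem Phi_posSemidef (A D : Matrix (Fin n) (Fin n) ℝ) (hDpsd : D.PosSemidef) (s : ℝ) :
    (Phi A D s).PosSemidef := by
  have hE : exp (s • Aᵀ) = (exp (s • A))ᴴ := by
    rw [Matrix.conjTranspose_eq_transpose_of_trivial, ← Matrix.transpose_smul,
      Matrix.exp_transpose]
  rw [Phi, hE]
  exact hDpsd.mul_mul_conjTranspose_same _

theorem Phi_entry_bound (A : Matrix (Fin n) (Fin n) ℝ)
    (hA : ∀ μ ∈ spectrum ℂ (A.map Complex.ofReal), μ.re < 0) (X : Matrix (Fin n) (Fin n) ℝ) :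
    ∃ K α : ℝ, 0 < α ∧ ∀ s : ℝ, 0 ≤ s → ∀ i j,
      |Phi A X s i j| ≤ K * Real.exp (-α * s) := by
  obtain ⟨C, α, hC, hα, hb⟩ := decays_entry A hA
  refine ⟨(∑ l : Fin n, ∑ k : Fin n, |X k l|) * (C * C), α, hα, fun s hs i j => ?_⟩
  have hE : exp (s • Aᵀ) = (exp (s • A))ᵀ := by
    rw [← Matrix.transpose_smul, Matrix.exp_transpose]
  set E := exp (s • A) with hEd
  have he1 : Real.exp (-α * s) ≤ 1 :=
    Real.exp_le_one_iff.mpr (by nlinarith)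
  have hee : Real.exp (-α * s) * Real.exp (-α * s) ≤ Real.exp (-α * s) := by
    nlinarith [Real.exp_pos (-α * s)]
  calc |Phi A X s i j| = |∑ l : Fin n, ∑ k : Fin n, E i k * X k l * E j l| := by
        simp only [Phi, hE, Matrix.mul_apply, Finset.sum_mul, Matrix.transpose_apply, ← hEd]
    _ ≤ ∑ l : Fin n, ∑ k : Fin n, |E i k * X k l * E j l| :=
        (Finset.abs_sum_le_sum_abs _ _).trans
          (Finset.sum_le_sum fun l _ => Finset.abs_sum_le_sum_abs _ _)
    _ ≤ ∑ l : Fin n, ∑ k : Fin n,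
          (C * Real.exp (-α * s)) * |X k l| * (C * Real.exp (-α * s)) := by
        refine Finset.sum_le_sum fun l _ => Finset.sum_le_sum fun k _ => ?_
        rw [abs_mul, abs_mul]
        have h1 := hb s hs i k
        have h2 := hb s hs j l
        have h3 : (0:ℝ) ≤ C * Real.exp (-α * s) := by positivity
        exact mul_le_mul (mul_le_mul h1 le_rfl (abs_nonneg _) h3) h2 (abs_nonneg _)
          (by positivity)
    _ = (∑ l : Fin n, ∑ k : Fin n, |X k l|) *
          (C * C * (Real.exp (-α * s) * Real.exp (-α * s))) := by
        rw [Finset.sum_mul]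
        refine Finset.sum_congr rfl fun l _ => ?_
        rw [Finset.sum_mul]
        refine Finset.sum_congr rfl fun k _ => ?_
        ring
    _ ≤ (∑ l : Fin n, ∑ k : Fin n, |X k l|) * (C * C) * Real.exp (-α * s) := by
        rw [mul_assoc ((∑ l : Fin n, ∑ k : Fin n, |X k l|)) (C*C)]
        refine mul_le_mul_of_nonneg_left ?_ (Finset.sum_nonneg fun l _ =>
          Finset.sum_nonneg fun k _ => abs_nonneg _)
        exact mul_le_mul_of_nonneg_left hee (by positivity)

theorem Phi_continuous_entry (A X : Matrix (Fin n) (Fin n) ℝ) (i j : Fin n) :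
    Continuous fun s : ℝ => Phi A X s i j := by
  have hc : Continuous fun s : ℝ => exp (s • A) := by
    letI : NormedRing (Matrix (Fin n) (Fin n) ℝ) := Matrix.linftyOpNormedRing
    letI : NormedAlgebra ℝ (Matrix (Fin n) (Fin n) ℝ) := Matrix.linftyOpNormedAlgebra
    letI : NormedAlgebra ℚ (Matrix (Fin n) (Fin n) ℝ) := NormedAlgebra.restrictScalars ℚ ℝ _
    exact exp_continuous.comp (continuous_id.smul continuous_const)
  have hc' : Continuous fun s : ℝ => exp (s • Aᵀ) := by
    letI : NormedRing (Matrix (Fin n) (Fin n) ℝ) := Matrix.linftyOpNormedRing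
    letI : NormedAlgebra ℝ (Matrix (Fin n) (Fin n) ℝ) := Matrix.linftyOpNormedAlgebra
    letI : NormedAlgebra ℚ (Matrix (Fin n) (Fin n) ℝ) := NormedAlgebra.restrictScalars ℚ ℝ _
    exact exp_continuous.comp (continuous_id.smul continuous_const)
  exact ((hc.matrix_mul continuous_const).matrix_mul hc').matrix_elem i j

theorem Phi_integrableOn (A : Matrix (Fin n) (Fin n) ℝ)
    (hA : ∀ μ ∈ spectrum ℂ (A.map Complex.ofReal), μ.re < 0) (X : Matrix (Fin n) (Fin n) ℝ)
    (i j : Fin n) : IntegrableOn (fun s => Phi A X s i j) (Ioi (0:ℝ)) := by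
  obtain ⟨K, α, hα, hb⟩ := Phi_entry_bound A hA X
  refine Integrable.mono' ((exp_neg_integrableOn_Ioi 0 hα).const_mul K)
    (Phi_continuous_entry A X i j).aestronglyMeasurable.restrict ?_
  filter_upwards [ae_restrict_mem measurableSet_Ioi] with s hs
  rw [Real.norm_eq_abs]
  exact hb s (le_of_lt hs) i j

theorem Phi_tendsto (A : Matrix (Fin n) (Fin n) ℝ)
    (hA : ∀ μ ∈ spectrum ℂ (A.map Complex.ofReal), μ.re < 0) (X : Matrix (Fin n) (Fin n) ℝ)
    (i j : Fin n) : Tendsto (fun s => Phi A X s i j) atTop (𝓝 0) := by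
  obtain ⟨K, α, hα, hb⟩ := Phi_entry_bound A hA X
  have h1 : Tendsto (fun s : ℝ => α * s) atTop atTop :=
    Tendsto.const_mul_atTop hα tendsto_id
  have h2 : Tendsto (fun s : ℝ => Real.exp (-(α * s))) atTop (𝓝 0) :=
    Real.tendsto_exp_neg_atTop_nhds_zero.comp h1
  have h3 : Tendsto (fun s : ℝ => K * Real.exp (-α * s)) atTop (𝓝 0) := by
    simpa [neg_mul] using h2.const_mul K
  refine squeeze_zero_norm' ?_ h3
  filter_upwards [eventually_ge_atTop (0:ℝ)] with s hs
  rw [Real.norm_eq_abs]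
  exact hb s hs i j

theorem Phi_key_integral (A : Matrix (Fin n) (Fin n) ℝ)
    (hA : ∀ μ ∈ spectrum ℂ (A.map Complex.ofReal), μ.re < 0) (X : Matrix (Fin n) (Fin n) ℝ)
    (i j : Fin n) :
    ∫ s in Ioi (0:ℝ), Phi A (A * X + X * Aᵀ) s i j = -(X i j) := by
  have hderiv : ∀ s ∈ Ici (0:ℝ), HasDerivAt (fun t => Phi A X t i j)
      (Phi A (A * X + X * Aᵀ) s i j) s := by
    intro s _
    letI : NormedRing (Matrix (Fin n) (Fin n) ℝ) := Matrix.linftyOpNormedRing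
    letI : NormedAlgebra ℝ (Matrix (Fin n) (Fin n) ℝ) := Matrix.linftyOpNormedAlgebra
    have h1 : HasDerivAt (fun t : ℝ => exp (t • A)) (A * exp (s • A)) s :=
      hasDerivAt_exp_smul_const' A s
    have h2 : HasDerivAt (fun t : ℝ => exp (t • Aᵀ)) (Aᵀ * exp (s • Aᵀ)) s :=
      hasDerivAt_exp_smul_const' Aᵀ s
    have h3 := (h1.mul_const X).mul h2
    have hval : A * exp (s • A) * X * exp (s • Aᵀ) +
        exp (s • A) * X * (Aᵀ * exp (s • Aᵀ)) = Phi A (A * X + X * Aᵀ) s := by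
      rw [← Phi_comm A X s]
      have c2 : Aᵀ * exp (s • Aᵀ) = exp (s • Aᵀ) * Aᵀ :=
        (((Commute.refl Aᵀ).smul_right s).exp_right).eq
      rw [c2]
      simp only [Phi]
      noncomm_ring
    have hM : HasDerivAt (Phi A X) (Phi A (A * X + X * Aᵀ) s) s := by
      rw [← hval]
      exact h3
    let P : Matrix (Fin n) (Fin n) ℝ →ₗ[ℝ] ℝ :=
      { toFun := fun M => M i j
        map_add' := fun _ _ => rfl
        map_smul' := fun _ _ => rfl }
    have hPc : Continuous P := LinearMap.continuous_of_finiteDimensional P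
    exact (ContinuousLinearMap.hasFDerivAt ⟨P, hPc⟩).comp_hasDerivAt s hM
  have hFTC := integral_Ioi_of_hasDerivAt_of_tendsto' hderiv
    (Phi_integrableOn A hA (A * X + X * Aᵀ) i j) (Phi_tendsto A hA X i j)
  rw [hFTC, Phi_zero]
  ring

end LyapunovAux

open LyapunovAux

/-- If `A` is Hurwitz, the Lyapunov equation `A V + V Aᵀ + D = 0` with `D`
symmetric positive semidefinite has the unique solution
`V = ∫₀^∞ e^{sA} D e^{sAᵀ} ds`, and this `V` is symmetric positive semidefinite. -/
theorem lyapunov_equation_solution (n : ℕ) (A D : Matrix (Fin n) (Fin n) ℝ)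
    (hA : ∀ μ ∈ spectrum ℂ (A.map Complex.ofReal), μ.re < 0)
    (hD : D.IsSymm) (hDpsd : D.PosSemidef)
    (V : Matrix (Fin n) (Fin n) ℝ)
    (hV : ∀ i j, V i j = ∫ s in Set.Ioi (0 : ℝ),
      (NormedSpace.exp (s • A) * D * NormedSpace.exp (s • Aᵀ)) i j) :
    A * V + V * Aᵀ + D = 0 ∧
    (∀ W : Matrix (Fin n) (Fin n) ℝ, A * W + W * Aᵀ + D = 0 → W = V) ∧
    V.IsSymm ∧ V.PosSemidef := by
  classical
  have hV' : ∀ i j, V i j = ∫ s in Set.Ioi (0:ℝ), Phi A D s i j := by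
    intro i j
    simp only [Phi]
    exact hV i j
  have hInt : ∀ (X : Matrix (Fin n) (Fin n) ℝ) (i j : Fin n),
      IntegrableOn (fun s => Phi A X s i j) (Set.Ioi (0:ℝ)) :=
    fun X i j => Phi_integrableOn A hA X i j
  have hKey := Phi_key_integral A hA
  -- the main integrand identity
  have e4 : ∀ s i j, (A * Phi A D s) i j + (Phi A D s * Aᵀ) i j
      = Phi A (A * D + D * Aᵀ) s i j := by
    intro s i j
    rw [← Matrix.add_apply, Phi_comm]
  -- Part 1 : the Lyapunov equation holds
  have h1 : A * V + V * Aᵀ + D = 0 := by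
    ext i j
    have e1 : (A * V) i j = ∫ s in Set.Ioi (0:ℝ), (A * Phi A D s) i j := by
      rw [Matrix.mul_apply]
      calc ∑ k, A i k * V k j = ∑ k, ∫ s in Set.Ioi (0:ℝ), A i k * Phi A D s k j :=
            Finset.sum_congr rfl fun k _ => by rw [hV' k j, ← integral_const_mul]
        _ = ∫ s in Set.Ioi (0:ℝ), ∑ k, A i k * Phi A D s k j :=
            (integral_finset_sum _ fun k _ => (hInt D k j).const_mul _).symm
        _ = ∫ s in Set.Ioi (0:ℝ), (A * Phi A D s) i j := by
            congr 1
    have e2 : (V * Aᵀ) i j = ∫ s in Set.Ioi (0:ℝ), (Phi A D s * Aᵀ) i j := by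
      rw [Matrix.mul_apply]
      calc ∑ k, V i k * Aᵀ k j = ∑ k, ∫ s in Set.Ioi (0:ℝ), Phi A D s i k * Aᵀ k j :=
            Finset.sum_congr rfl fun k _ => by rw [hV' i k, ← integral_mul_const]
        _ = ∫ s in Set.Ioi (0:ℝ), ∑ k, Phi A D s i k * Aᵀ k j :=
            (integral_finset_sum _ fun k _ => (hInt D i k).mul_const _).symm
        _ = ∫ s in Set.Ioi (0:ℝ), (Phi A D s * Aᵀ) i j := by
            congr 1
    have intA : Integrable (fun s => (A * Phi A D s) i j)
        (volume.restrict (Set.Ioi (0:ℝ))) := by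
      have hfe : (fun s => (A * Phi A D s) i j)
          = fun s => ∑ k, A i k * Phi A D s k j := by
        funext s; rw [Matrix.mul_apply]
      rw [hfe]
      exact integrable_finset_sum _ fun k _ => (hInt D k j).const_mul _
    have intB : Integrable (fun s => (Phi A D s * Aᵀ) i j)
        (volume.restrict (Set.Ioi (0:ℝ))) := by
      have hfe : (fun s => (Phi A D s * Aᵀ) i j)
          = fun s => ∑ k, Phi A D s i k * Aᵀ k j := by
        funext s; rw [Matrix.mul_apply]
      rw [hfe]
      exact integrable_finset_sum _ fun k _ => (hInt D i k).mul_const _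
    have e3 : (A * V) i j + (V * Aᵀ) i j
        = ∫ s in Set.Ioi (0:ℝ), ((A * Phi A D s) i j + (Phi A D s * Aᵀ) i j) := by
      rw [e1, e2, ← integral_add intA intB]
    have e6 : (A * V) i j + (V * Aᵀ) i j = -(D i j) := by
      rw [e3]
      simp only [e4]
      exact hKey D i j
    rw [Matrix.add_apply, Matrix.add_apply, Matrix.zero_apply]
    linarith
  -- Part 3 : symmetry
  have hsymm : V.IsSymm := by
    show Vᵀ = V
    ext i j
    rw [Matrix.transpose_apply, hV' j i, hV' i j]
    congr 1
    funext s
    have h := congrFun (congrFun (Phi_transpose A D hD s) i) j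
    rwa [Matrix.transpose_apply] at h
  -- Part 4 : positive semidefiniteness
  have hpsd : V.PosSemidef := by
    rw [Matrix.posSemidef_iff_dotProduct_mulVec]
    constructor
    · show Vᴴ = V
      rw [Matrix.conjTranspose_eq_transpose_of_trivial]
      exact hsymm
    intro x
    have hsx : star x = x := by
      funext i
      simp
    rw [hsx]
    have hq : x ⬝ᵥ V *ᵥ x = ∫ s in Set.Ioi (0:ℝ), x ⬝ᵥ (Phi A D s) *ᵥ x := by
      calc x ⬝ᵥ V *ᵥ x = ∑ i, ∑ j, x i * (V i j * x j) := by
            simp [dotProduct, Matrix.mulVec, Finset.mul_sum]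
        _ = ∑ i, ∑ j, ∫ s in Set.Ioi (0:ℝ), x i * (Phi A D s i j * x j) := by
            refine Finset.sum_congr rfl fun i _ => Finset.sum_congr rfl fun j _ => ?_
            rw [hV' i j, ← integral_mul_const, ← integral_const_mul]
        _ = ∫ s in Set.Ioi (0:ℝ), ∑ i, ∑ j, x i * (Phi A D s i j * x j) := by
            symm
            rw [integral_finset_sum _ (fun i _ => integrable_finset_sum _
              (fun j _ => ((hInt D i j).mul_const (x j)).const_mul (x i)))]
            refine Finset.sum_congr rfl fun i _ => ?_
            rw [integral_finset_sum _ (fun j _ => ((hInt D i j).mul_const (x j)).const_mul (x i))]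
        _ = ∫ s in Set.Ioi (0:ℝ), x ⬝ᵥ (Phi A D s) *ᵥ x := by
            congr 1
            funext s
            simp [dotProduct, Matrix.mulVec, Finset.mul_sum]
    rw [hq]
    refine setIntegral_nonneg measurableSet_Ioi fun s _ => ?_
    have h := (Matrix.posSemidef_iff_dotProduct_mulVec.1 (Phi_posSemidef A D hDpsd s)).2 x
    rwa [hsx] at h
  -- Part 2 : uniqueness
  refine ⟨h1, ?_, hsymm, hpsd⟩
  intro W hW
  have hWD : A * W + W * Aᵀ = -D := by
    rwa [add_eq_zero_iff_eq_neg] at hW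
  ext i j
  have h2 := hKey W i j
  rw [hWD] at h2
  have e5 : ∀ s : ℝ, Phi A (-D) s i j = -(Phi A D s i j) := by
    intro s
    simp [Phi, mul_neg, neg_mul, Matrix.neg_apply]
  simp only [e5] at h2
  rw [integral_neg] at h2
  have h3 : ∫ s in Set.Ioi (0:ℝ), Phi A D s i j = W i j := neg_injective h2
  rw [hV' i j]
  exact h3.symm
end

section
/- The 4×4 matrix A_s = (1/2)·[[−γ, 0, 0, G₋₁−G₀], [0, −γ, G₋₁+G₀, 0], [0, G₋₁−G₀, −2κ, 0], [G₋₁+G₀, 0, 0, −2κ]] is Hurwitz (all eigenvalues have negative real part) if and only if G₋₁² − G₀² < 2γκ, given γ > 0 and κ > 0. -/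
open Matrix

lemma quad_neg_re_iff (b c : ℝ) (hb : 0 < b) :
    (∀ μ : ℂ, μ^2 + (b:ℂ)*μ + (c:ℂ) = 0 → μ.re < 0) ↔ 0 < c := by
  constructor
  · intro h
    by_contra hc
    push_neg at hc
    set s := Real.sqrt (b^2 - 4*c) with hs
    have hs2 : s^2 = b^2 - 4*c := Real.sq_sqrt (by nlinarith)
    have hsb : b ≤ s := by
      have : Real.sqrt (b^2) ≤ s := Real.sqrt_le_sqrt (by nlinarith)
      rwa [Real.sqrt_sq hb.le] at this
    set r : ℝ := (-b + s)/2 with hr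
    have hroot : (r:ℂ)^2 + (b:ℂ)*(r:ℂ) + (c:ℂ) = 0 := by
      have h0 : r^2 + b*r + c = 0 := by nlinarith
      calc (r:ℂ)^2 + (b:ℂ)*(r:ℂ) + (c:ℂ) = ((r^2 + b*r + c : ℝ) : ℂ) := by push_cast; ring
        _ = 0 := by rw [h0]; norm_num
    have := h r hroot
    simp only [Complex.ofReal_re] at this
    nlinarith
  · intro hc μ hroot
    have hre := congrArg Complex.re hroot
    have him := congrArg Complex.im hroot
    simp [pow_two, Complex.add_re, Complex.add_im, Complex.mul_re, Complex.mul_im,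
      Complex.ofReal_re, Complex.ofReal_im] at hre him
    set x := μ.re; set y := μ.im
    rcases eq_or_ne y 0 with hy | hy
    · rw [hy] at hre
      simp at hre
      nlinarith [sq_nonneg x]
    · have hx : x = -b/2 := by
        have h2 : y * (2*x + b) = 0 := by nlinarith
        rcases mul_eq_zero.1 h2 with h | h
        · exact absurd h hy
        · linarith
      rw [hx]; linarith

set_option maxHeartbeats 4000000 in
lemma det_As (γ κ G₀ Gm : ℝ) (μ : ℂ) :
    (μ • (1 : Matrix (Fin 4) (Fin 4) ℂ) -
      !![-(γ:ℂ)/2, 0, 0, ((Gm:ℂ) - G₀)/2;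
         0, -(γ:ℂ)/2, ((Gm:ℂ) + G₀)/2, 0;
         0, ((Gm:ℂ) - G₀)/2, -(κ:ℂ), 0;
         ((Gm:ℂ) + G₀)/2, 0, 0, -(κ:ℂ)]).det
      = (μ^2 + ((γ/2+κ : ℝ):ℂ)*μ + ((γ*κ/2 - (Gm^2-G₀^2)/4 : ℝ):ℂ))^2 := by
  simp only [Matrix.det_succ_row_zero, Fin.sum_univ_succ, Matrix.submatrix_apply,
    Matrix.sub_apply, Matrix.smul_apply, Matrix.one_apply, Fin.sum_univ_zero]
  norm_num [Fin.succAbove, Fin.lt_def, Fin.succ, Fin.castSucc, Fin.castAdd, Fin.castLE,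
    Matrix.cons_val', Matrix.cons_val_zero,
    Matrix.cons_val_one, Matrix.head_cons, Matrix.head_fin_const, Matrix.cons_val_fin_one,
    Fin.ext_iff]
  ring

/-- The RWA drift matrix
`A_s = (1/2)·[[−γ,0,0,G₋₁−G₀],[0,−γ,G₋₁+G₀,0],[0,G₋₁−G₀,−2κ,0],[G₋₁+G₀,0,0,−2κ]]`
is Hurwitz if and only if `G₋₁² − G₀² < 2γκ` (given `γ, κ > 0`). -/
theorem As_hurwitz_iff (γ κ G₀ Gm : ℝ) (hγ : 0 < γ) (hκ : 0 < κ)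
    (As : Matrix (Fin 4) (Fin 4) ℝ)
    (hAs : As = (1 / 2 : ℝ) •
      !![-γ, 0, 0, Gm - G₀;
         0, -γ, Gm + G₀, 0;
         0, Gm - G₀, -2 * κ, 0;
         Gm + G₀, 0, 0, -2 * κ]) :
    (∀ μ ∈ spectrum ℂ (As.map Complex.ofReal), μ.re < 0) ↔ Gm ^ 2 - G₀ ^ 2 < 2 * γ * κ := by
  have hmap : As.map Complex.ofReal =
      !![-(γ:ℂ)/2, 0, 0, ((Gm:ℂ) - G₀)/2;
         0, -(γ:ℂ)/2, ((Gm:ℂ) + G₀)/2, 0;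
         0, ((Gm:ℂ) - G₀)/2, -(κ:ℂ), 0;
         ((Gm:ℂ) + G₀)/2, 0, 0, -(κ:ℂ)] := by
    subst hAs
    ext i j
    fin_cases i <;> fin_cases j <;>
      simp [Matrix.map_apply] <;> push_cast <;> ring
  set b : ℝ := γ/2 + κ with hbdef
  set c : ℝ := γ*κ/2 - (Gm^2-G₀^2)/4 with hcdef
  have key : ∀ μ : ℂ, μ ∈ spectrum ℂ (As.map Complex.ofReal) ↔
      μ^2 + (b:ℂ)*μ + (c:ℂ) = 0 := by
    intro μ
    rw [spectrum.mem_iff, Algebra.algebraMap_eq_smul_one,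
      Matrix.isUnit_iff_isUnit_det, isUnit_iff_ne_zero, not_ne_iff, hmap,
      det_As γ κ G₀ Gm μ, pow_eq_zero_iff (two_ne_zero)]
  have hb : 0 < b := by rw [hbdef]; positivity
  constructor
  · intro h
    have := (quad_neg_re_iff b c hb).1 (fun μ hμ => h μ ((key μ).2 hμ))
    rw [hcdef] at this; linarith
  · intro h μ hμ
    exact (quad_neg_re_iff b c hb).2 (by rw [hcdef]; linarith) μ ((key μ).1 hμ)
end

section
/- Assume γ > 0, κ > 0, n̄ ≥ 0, and G₋₁² − G₀² < 2γκ. Then the steady-state covariance matrix V_s solving A_s V_s + V_s A_sᵀ + D_s = 0, with A_s as in the RWA model and D_s = diag(γ(n̄+1/2), γ(n̄+1/2), κ, κ), has mirror-block entries (V_s)₁₁ = f₋, (V_s)₂₂ = f₊, (V_s)₁₂ = 0, where f± = 1/2 + n̄ − 2κ(G₀ ± G₋₁)(G₀ n̄ ∓ G₋₁(n̄+1)) / ((γ + 2κ)(G₀² − G₋₁² + 2γκ)). -/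
open Matrix

/-- **Steady-state mirror variances in the RWA.** The covariance matrix `V_s` solving
`A_s V_s + V_s A_sᵀ + D_s = 0` has mirror-block entries `(V_s)₁₁ = f₋`,
`(V_s)₂₂ = f₊`, `(V_s)₁₂ = 0`, where
`f± = 1/2 + n̄ − 2κ(G₀ ± G₋₁)(G₀n̄ ∓ G₋₁(n̄+1)) / ((γ+2κ)(G₀²−G₋₁²+2γκ))`. -/
theorem rwa_steady_state_variances (γ κ nb G₀ Gm : ℝ)
    (hγ : 0 < γ) (hκ : 0 < κ) (hnb : 0 ≤ nb)
    (hstab : Gm ^ 2 - G₀ ^ 2 < 2 * γ * κ)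
    (As Ds : Matrix (Fin 4) (Fin 4) ℝ)
    (hAs : As = (1 / 2 : ℝ) •
      !![-γ, 0, 0, Gm - G₀;
         0, -γ, Gm + G₀, 0;
         0, Gm - G₀, -2 * κ, 0;
         Gm + G₀, 0, 0, -2 * κ])
    (hDs : Ds = Matrix.diagonal ![γ * (nb + 1 / 2), γ * (nb + 1 / 2), κ, κ]) :
    ∀ V : Matrix (Fin 4) (Fin 4) ℝ, As * V + V * Asᵀ + Ds = 0 →
      V 0 0 = 1 / 2 + nb -
          2 * κ * (G₀ - Gm) * (G₀ * nb + Gm * (nb + 1)) /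
            ((γ + 2 * κ) * (G₀ ^ 2 - Gm ^ 2 + 2 * γ * κ)) ∧
      V 1 1 = 1 / 2 + nb -
          2 * κ * (G₀ + Gm) * (G₀ * nb - Gm * (nb + 1)) /
            ((γ + 2 * κ) * (G₀ ^ 2 - Gm ^ 2 + 2 * γ * κ)) ∧
      V 0 1 = 0 := by
  subst hAs hDs
  intro V h
  have hd : (0:ℝ) < γ + 2 * κ := by linarith
  have hP : (0:ℝ) < G₀ ^ 2 - Gm ^ 2 + 2 * γ * κ := by linarith
  have hDen : ((γ + 2 * κ) * (G₀ ^ 2 - Gm ^ 2 + 2 * γ * κ)) ≠ 0 :=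
    (mul_pos hd hP).ne'
  have e00 := congrFun (congrFun h 0) 0
  have e03 := congrFun (congrFun h 0) 3
  have e30 := congrFun (congrFun h 3) 0
  have e33 := congrFun (congrFun h 3) 3
  have e11 := congrFun (congrFun h 1) 1
  have e12 := congrFun (congrFun h 1) 2
  have e21 := congrFun (congrFun h 2) 1
  have e22 := congrFun (congrFun h 2) 2
  have e01 := congrFun (congrFun h 0) 1
  have e02 := congrFun (congrFun h 0) 2
  have e31 := congrFun (congrFun h 3) 1
  have e32 := congrFun (congrFun h 3) 2
  simp only [Matrix.add_apply, Matrix.mul_apply, Matrix.smul_apply, Matrix.transpose_apply,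
    Fin.sum_univ_four, Matrix.diagonal, Matrix.zero_apply, smul_eq_mul, Matrix.of_apply,
    Matrix.cons_val', Matrix.cons_val_zero, Matrix.cons_val_one, Matrix.head_cons,
    Matrix.empty_val', Matrix.cons_val_fin_one, Matrix.head_fin_const,
    Matrix.cons_val_two, Matrix.tail_cons, Matrix.cons_val_three, Fin.reduceEq, reduceIte, if_true] at e00 e03 e30 e33 e11 e12 e21 e22 e01 e02 e31 e32
  -- block for V 0 0
  have hq : V 3 0 = V 0 3 := by
    have h2 : (γ + 2 * κ) * V 3 0 = (γ + 2 * κ) * V 0 3 := by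
      linear_combination 2 * e03 - 2 * e30
    exact mul_left_cancel₀ hd.ne' h2
  have hpv : V 0 3 * ((γ + 2 * κ) * (G₀ ^ 2 - Gm ^ 2 + 2 * γ * κ)) =
      γ * κ * ((Gm + G₀) * (2 * nb + 1) + (Gm - G₀)) := by
    linear_combination (-2 * κ * (Gm + G₀)) * e00 + (-4 * γ * κ) * e03 +
      (-γ * (Gm - G₀)) * e33 + ((Gm - G₀) * (Gm + G₀) * (κ + γ / 2)) * hq
  have hx : V 0 0 * ((γ + 2 * κ) * (G₀ ^ 2 - Gm ^ 2 + 2 * γ * κ)) * γ =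
      ((1 / 2 + nb) * ((γ + 2 * κ) * (G₀ ^ 2 - Gm ^ 2 + 2 * γ * κ)) -
        2 * κ * (G₀ - Gm) * (G₀ * nb + Gm * (nb + 1))) * γ := by
    linear_combination (-(γ + 2 * κ) * (G₀ ^ 2 - Gm ^ 2 + 2 * γ * κ)) * e00 +
      ((Gm - G₀) / 2 * ((γ + 2 * κ) * (G₀ ^ 2 - Gm ^ 2 + 2 * γ * κ))) * hq +
      (Gm - G₀) * hpv
  have hx' := mul_right_cancel₀ hγ.ne' hx
  refine ⟨?_, ?_, ?_⟩
  · rw [eq_sub_iff_add_eq, ← eq_sub_iff_add_eq', div_eq_iff hDen]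
    linear_combination hx'
  · -- block for V 1 1
    have hq' : V 2 1 = V 1 2 := by
      have h2 : (γ + 2 * κ) * V 2 1 = (γ + 2 * κ) * V 1 2 := by
        linear_combination 2 * e12 - 2 * e21
      exact mul_left_cancel₀ hd.ne' h2
    have hpv' : V 1 2 * ((γ + 2 * κ) * (G₀ ^ 2 - Gm ^ 2 + 2 * γ * κ)) =
        γ * κ * ((Gm - G₀) * (2 * nb + 1) + (Gm + G₀)) := by
      linear_combination (-2 * κ * (Gm - G₀)) * e11 + (-4 * γ * κ) * e12 +
        (-γ * (Gm + G₀)) * e22 + ((Gm - G₀) * (Gm + G₀) * (κ + γ / 2)) * hq'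
    have hy : V 1 1 * ((γ + 2 * κ) * (G₀ ^ 2 - Gm ^ 2 + 2 * γ * κ)) * γ =
        ((1 / 2 + nb) * ((γ + 2 * κ) * (G₀ ^ 2 - Gm ^ 2 + 2 * γ * κ)) -
          2 * κ * (G₀ + Gm) * (G₀ * nb - Gm * (nb + 1))) * γ := by
      linear_combination (-(γ + 2 * κ) * (G₀ ^ 2 - Gm ^ 2 + 2 * γ * κ)) * e11 +
        ((Gm + G₀) / 2 * ((γ + 2 * κ) * (G₀ ^ 2 - Gm ^ 2 + 2 * γ * κ))) * hq' +
        (Gm + G₀) * hpv'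
    have hy' := mul_right_cancel₀ hγ.ne' hy
    rw [eq_sub_iff_add_eq, ← eq_sub_iff_add_eq', div_eq_iff hDen]
    linear_combination hy'
  · -- block for V 0 1
    have k1 : 2 * γ * (γ + 2 * κ) * V 0 1 =
        2 * (Gm - G₀) * (Gm + G₀) * (V 0 1 + V 3 2) := by
      linear_combination (-2 * (γ + 2 * κ)) * e01 + (-2 * (Gm - G₀)) * e31 +
        (-2 * (Gm + G₀)) * e02
    have k2 : 4 * κ * (γ + 2 * κ) * V 3 2 =
        2 * (Gm - G₀) * (Gm + G₀) * (V 0 1 + V 3 2) := by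
      linear_combination (-2 * (γ + 2 * κ)) * e32 + (-2 * (Gm + G₀)) * e02 +
        (-2 * (Gm - G₀)) * e31
    have k3 : γ * V 0 1 = 2 * κ * V 3 2 := by
      have h2 : (2 * (γ + 2 * κ)) * (γ * V 0 1) = (2 * (γ + 2 * κ)) * (2 * κ * V 3 2) := by
        linear_combination k1 - k2
      exact mul_left_cancel₀ (by positivity) h2
    have k4 : V 0 1 * ((γ + 2 * κ) * (G₀ ^ 2 - Gm ^ 2 + 2 * γ * κ)) = 0 := by
      linear_combination κ * k1 + (-(Gm - G₀) * (Gm + G₀)) * k3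
    rcases mul_eq_zero.mp k4 with h0 | h0
    · exact h0
    · exact absurd h0 hDen
end
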